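/- arXiv:1812.06828 — 8 statements merged into one kernel-verified Lean document; each statement's English description precedes it below -/
import Mathlib

section
/- Let k be a field of characteristic zero and let g, h ∈ k[X₁,…,Xₙ] be coprime polynomials with g irreducible of degree d ≥ 1. Then there exists a field extension k₁ of k of degree at most d and a point p ∈ k₁ⁿ such that g(p) = 0, h(p) ≠ 0, and the gradient of g at p is nonzero. -/
theorem coeff_pderiv_aux {k : Type} [CommRing k] {σ : Type} (i : σ) (f : MvPolynomial σ k)
    (m : σ →₀ ℕ) [DecidableEq σ] :
    MvPolynomial.coeff m (MvPolynomial.pderiv i f)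
      = MvPolynomial.coeff (m + Finsupp.single i 1) f * ((m i : ℕ) + 1 : k) := by
  induction f using MvPolynomial.induction_on' with
  | add p q hp hq => simp [hp, hq, add_mul]
  | monomial s a =>
    rw [MvPolynomial.pderiv_monomial, MvPolynomial.coeff_monomial, MvPolynomial.coeff_monomial]
    by_cases hsm : s = m + Finsupp.single i 1
    · subst hsm
      have h1 : m + Finsupp.single i 1 - Finsupp.single i 1 = m := by
        ext j; simp only [Finsupp.coe_tsub, Pi.sub_apply, Finsupp.add_apply]; omega
      have h2 : ((m + Finsupp.single i 1 : σ →₀ ℕ)) i = m i + 1 := by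
        rw [Finsupp.add_apply, Finsupp.single_apply, if_pos rfl]
      rw [if_pos h1, h2]
      simp only [if_pos rfl]
      push_cast
      ring
    · rw [if_neg hsm, mul_comm]
      by_cases h2 : s - Finsupp.single i 1 = m
      · rw [if_pos h2]
        have hsi : s i = 0 := by
          by_contra hne
          apply hsm
          ext j
          have hj : s j - Finsupp.single i 1 j = m j := by
            rw [← Finsupp.tsub_apply, h2]
          rw [Finsupp.add_apply]
          rcases eq_or_ne i j with rfl | hij
          · rw [Finsupp.single_apply, if_pos rfl] at hj ⊢; omega
          · rw [Finsupp.single_apply, if_neg hij] at hj ⊢; omega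
        simp [hsi]
      · rw [if_neg h2, zero_mul]

theorem aeval_cons_aux {k : Type} [CommSemiring k] {A : Type} [CommSemiring A] [Algebra k A]
    {m : ℕ} (y : A) (s : Fin m → k) (f : MvPolynomial (Fin (m + 1)) k) :
    MvPolynomial.aeval (Fin.cons y (fun j => algebraMap k A (s j))) f
      = Polynomial.aeval y
          (Polynomial.map (MvPolynomial.eval s) (MvPolynomial.finSuccEquiv k m f)) := by
  induction f using MvPolynomial.induction_on with
  | C a => simp [MvPolynomial.finSuccEquiv_apply]
  | add p q hp hq => simp [hp, hq]
  | mul_X p j hp =>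
    rw [map_mul, map_mul, Polynomial.map_mul, map_mul, hp]
    congr 1
    refine Fin.cases ?_ ?_ j
    · simp [MvPolynomial.finSuccEquiv_X_zero]
    · intro j'
      simp [MvPolynomial.finSuccEquiv_X_succ]


/-- For coprime `g, h ∈ k[X₁,…,Xₙ]` over a field of characteristic zero with `g`
irreducible of degree `d ≥ 1`, there is a field extension `k₁/k` of degree at most `d`
and a point `p ∈ k₁ⁿ` with `g(p) = 0`, `h(p) ≠ 0` and `grad g(p) ≠ 0`. -/
theorem exists_field_extension_point {k : Type} [Field k] [CharZero k]
    (n d : ℕ) (g h : MvPolynomial (Fin n) k)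
    (hcop : IsRelPrime g h) (hirr : Irreducible g)
    (hdeg : g.totalDegree = d) (hd : 1 ≤ d) :
    ∃ (k₁ : Type) (_ : Field k₁) (_ : Algebra k k₁),
      FiniteDimensional k k₁ ∧ Module.finrank k k₁ ≤ d ∧
      ∃ p : Fin n → k₁,
        MvPolynomial.aeval p g = 0 ∧
        MvPolynomial.aeval p h ≠ 0 ∧
        ∃ i : Fin n, MvPolynomial.aeval p (MvPolynomial.pderiv i g) ≠ 0 := by
  classical
  have hg0 : g ≠ 0 := by
    rintro rfl
    rw [MvPolynomial.totalDegree_zero] at hdeg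
    omega
  -- find a monomial of positive degree and a variable occurring in it
  obtain ⟨w, hw, hws⟩ := Finset.exists_mem_eq_sup g.support
    (MvPolynomial.support_nonempty.mpr hg0) (fun s => s.sum fun _ e => e)
  have hwsum : 1 ≤ w.sum fun _ e => e := by
    have : g.totalDegree = w.sum fun _ e => e := hws
    omega
  have hwne : w ≠ 0 := by
    rintro rfl
    simp [Finsupp.sum] at hwsum
  obtain ⟨i, hi⟩ : ∃ i, w i ≠ 0 := by
    by_contra hc
    push_neg at hc
    exact hwne (Finsupp.ext fun j => hc j)
  -- pderiv i g ≠ 0 (char zero)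
  have hcoeffg : MvPolynomial.coeff w g ≠ 0 := MvPolynomial.mem_support_iff.mp hw
  have hsubadd : w - Finsupp.single i 1 + Finsupp.single i 1 = w := by
    ext j
    simp only [Finsupp.add_apply, Finsupp.coe_tsub, Pi.sub_apply, Finsupp.single_apply]
    rcases eq_or_ne i j with rfl | hij
    · simp; omega
    · simp [hij]
  have hsubi : ((w - Finsupp.single i 1 : Fin n →₀ ℕ)) i = w i - 1 := by
    rw [Finsupp.tsub_apply, Finsupp.single_apply, if_pos rfl]
  have key : MvPolynomial.coeff (w - Finsupp.single i 1) (MvPolynomial.pderiv i g)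
      = MvPolynomial.coeff w g * ((w i : ℕ) : k) := by
    rw [coeff_pderiv_aux, hsubadd, hsubi]
    congr 1
    have : ((w i - 1 : ℕ) : k) + 1 = ((w i : ℕ) : k) := by
      have : (w i - 1) + 1 = w i := by omega
      rw [← this]
      push_cast
      ring
    rw [this]
  have hpd : MvPolynomial.pderiv i g ≠ 0 := by
    intro h0
    rw [h0, MvPolynomial.coeff_zero] at key
    exact (mul_ne_zero hcoeffg (Nat.cast_ne_zero.mpr hi)) key.symm
  have hdeg_i : 1 ≤ g.degreeOf i :=
    le_trans (by omega) (MvPolynomial.monomial_le_degreeOf i hw)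
  have hdi_le : g.degreeOf i ≤ d := hdeg ▸ MvPolynomial.degreeOf_le_totalDegree g i
  -- degreeOf i (pderiv i g) < degreeOf i g
  have hpd_deg : (MvPolynomial.pderiv i g).degreeOf i < g.degreeOf i := by
    rw [MvPolynomial.degreeOf_lt_iff (by omega)]
    intro m hm
    have h1 : MvPolynomial.coeff (m + Finsupp.single i 1) g * ((m i : ℕ) + 1 : k) ≠ 0 := by
      rw [← coeff_pderiv_aux]
      exact MvPolynomial.mem_support_iff.mp hm
    have h2 : m + Finsupp.single i 1 ∈ g.support :=
      MvPolynomial.mem_support_iff.mpr (left_ne_zero_of_mul h1)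
    have h3 := MvPolynomial.monomial_le_degreeOf i h2
    have h4 : ((m + Finsupp.single i 1 : Fin n →₀ ℕ)) i = m i + 1 := by
      rw [Finsupp.add_apply, Finsupp.single_apply, if_pos rfl]
    omega
  -- set up the variable isolation
  obtain ⟨m, rfl⟩ : ∃ m, n = m + 1 :=
    ⟨n - 1, (Nat.succ_pred_eq_of_pos (Nat.pos_of_ne_zero (by rintro rfl; exact i.elim0))).symm⟩
  set σ : Equiv.Perm (Fin (m + 1)) := Equiv.swap i 0 with hσ
  have hσi : σ i = 0 := Equiv.swap_apply_left i 0
  set Φ : MvPolynomial (Fin (m + 1)) k ≃ₐ[k] Polynomial (MvPolynomial (Fin m) k) :=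
    (MvPolynomial.renameEquiv k σ).trans (MvPolynomial.finSuccEquiv k m) with hΦ
  have hΦ_apply : ∀ f : MvPolynomial (Fin (m + 1)) k,
      Φ f = MvPolynomial.finSuccEquiv k m (MvPolynomial.rename σ f) := fun f => rfl
  have natdeg : ∀ f : MvPolynomial (Fin (m + 1)) k, (Φ f).natDegree = f.degreeOf i := by
    intro f
    rw [hΦ_apply, MvPolynomial.natDegree_finSuccEquiv, ← hσi,
      MvPolynomial.degreeOf_rename_of_injective σ.injective]
  set G := Φ g with hG
  set F' := Φ (h * MvPolynomial.pderiv i g) with hF'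
  have hG1 : 1 ≤ G.natDegree := by rw [natdeg]; exact hdeg_i
  have hGd : G.natDegree ≤ d := by rw [natdeg]; exact hdi_le
  have hGirr : Irreducible G := (MulEquiv.irreducible_iff Φ.toMulEquiv).mpr hirr
  have hgprime : Prime g := (UniqueFactorizationMonoid.irreducible_iff_prime).mp hirr
  have hGF : ¬ G ∣ F' := by
    intro hdvd
    have hdvd' : g ∣ h * MvPolynomial.pderiv i g := by
      have := map_dvd Φ.symm hdvd
      rw [hG, hF'] at this
      simpa using this
    rcases hgprime.2.2 _ _ hdvd' with h1 | h2
    · exact hirr.not_isUnit (hcop dvd_rfl h1)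
    · -- g ∣ pderiv i g : contradiction via degrees
      have hPD0 : Φ (MvPolynomial.pderiv i g) ≠ 0 :=
        (map_ne_zero_iff Φ Φ.injective).mpr hpd
      have := Polynomial.natDegree_le_of_dvd (map_dvd Φ h2) hPD0
      rw [natdeg, natdeg] at this
      omega
  -- fraction field setup
  set R := MvPolynomial (Fin m) k with hR
  letI : NormalizationMonoid R := UniqueFactorizationMonoid.normalizationMonoid.toNormalizationMonoid
  letI : NormalizedGCDMonoid R := UniqueFactorizationMonoid.toNormalizedGCDMonoid R
  set K := FractionRing R with hK
  set φ : R →+* K := algebraMap R K with hφ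
  have hφinj : Function.Injective φ := IsFractionRing.injective R K
  have hmapinj : Function.Injective (Polynomial.map φ) := Polynomial.map_injective φ hφinj
  have hGne : G ≠ 0 := hGirr.ne_zero
  have hGprim : G.IsPrimitive := by
    intro r hr
    obtain ⟨u, hu⟩ := hr
    rcases hGirr.isUnit_or_isUnit hu with h1 | h2
    · exact Polynomial.isUnit_C.mp h1
    · exfalso
      have h3 : u.natDegree = 0 := Polynomial.natDegree_eq_zero_of_isUnit h2
      have h4 : G.natDegree ≤ (Polynomial.C r).natDegree + u.natDegree :=
        hu ▸ Polynomial.natDegree_mul_le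
      rw [Polynomial.natDegree_C, h3] at h4
      omega
  set Gk := G.map φ with hGk
  set Fk := F'.map φ with hFk
  have hGkirr : Irreducible Gk :=
    (hGprim.irreducible_iff_irreducible_map_fraction_map (K := K)).mp hGirr
  have hGprime' : Prime G := (UniqueFactorizationMonoid.irreducible_iff_prime).mp hGirr
  have hGkF : ¬ Gk ∣ Fk := by
    intro hdvd
    obtain ⟨wk, hwk⟩ := hdvd
    obtain ⟨c, hc⟩ := IsLocalization.integerNormalization_map_to_map (nonZeroDivisors R) wk
    have hc0 : (c : R) ≠ 0 := nonZeroDivisors.ne_zero c.2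
    have heq : Polynomial.map φ (Polynomial.C (c : R) * F')
        = Polynomial.map φ (G * IsLocalization.integerNormalization (nonZeroDivisors R) wk) := by
      rw [Polynomial.map_mul, Polynomial.map_mul, hc, Polynomial.map_C,
        ← IsScalarTower.algebraMap_smul K (c : R) wk, Polynomial.smul_eq_C_mul,
        ← hGk, ← hFk, hwk]
      ring
    have heq2 := hmapinj heq
    have hdvd2 : G ∣ Polynomial.C (c : R) * F' := Dvd.intro _ heq2.symm
    rcases hGprime'.2.2 _ _ hdvd2 with h1 | h2
    · have h5 : Polynomial.C (c : R) ≠ 0 := by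
        rw [Ne, Polynomial.C_eq_zero]; exact hc0
      have := Polynomial.natDegree_le_of_dvd h1 h5
      rw [Polynomial.natDegree_C] at this
      omega
    · exact hGF h2
  have hcoprime : IsCoprime Gk Fk := (hGkirr.coprime_iff_not_dvd).mpr hGkF
  obtain ⟨a, b, hab⟩ := hcoprime
  obtain ⟨r, hr⟩ := IsLocalization.integerNormalization_map_to_map (nonZeroDivisors R) a
  obtain ⟨s, hs⟩ := IsLocalization.integerNormalization_map_to_map (nonZeroDivisors R) b
  set a0 := IsLocalization.integerNormalization (nonZeroDivisors R) a with ha0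
  set b0 := IsLocalization.integerNormalization (nonZeroDivisors R) b with hb0
  have E : Polynomial.C (s : R) * a0 * G + Polynomial.C (r : R) * b0 * F'
      = Polynomial.C ((r : R) * (s : R)) := by
    apply hmapinj
    rw [Polynomial.map_add, Polynomial.map_mul, Polynomial.map_mul, Polynomial.map_mul,
      Polynomial.map_mul, Polynomial.map_C, Polynomial.map_C, hr, hs, Polynomial.map_C,
      ← IsScalarTower.algebraMap_smul K (r : R) a, ← IsScalarTower.algebraMap_smul K (s : R) b,
      Polynomial.smul_eq_C_mul, Polynomial.smul_eq_C_mul, map_mul, Polynomial.C_mul]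
    linear_combination (Polynomial.C (φ (r : R)) * Polynomial.C (φ (s : R))) * hab
  -- choose a good specialization point q
  have hr0 : (r : R) ≠ 0 := nonZeroDivisors.ne_zero r.2
  have hs0 : (s : R) ≠ 0 := nonZeroDivisors.ne_zero s.2
  have hlc : G.leadingCoeff ≠ 0 := Polynomial.leadingCoeff_ne_zero.mpr hGne
  set N : R := (r : R) * (s : R) * G.leadingCoeff with hN
  have hN0 : N ≠ 0 := mul_ne_zero (mul_ne_zero hr0 hs0) hlc
  obtain ⟨q, hq⟩ : ∃ q : Fin m → k, MvPolynomial.eval q N ≠ 0 := by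
    by_contra hcq
    push_neg at hcq
    exact hN0 (MvPolynomial.funext fun x => by rw [hcq x, map_zero])
  set e : R →+* k := MvPolynomial.eval q with he
  have heN : e ((r : R) * (s : R)) ≠ 0 ∧ e G.leadingCoeff ≠ 0 := by
    rw [hN, map_mul] at hq
    exact ⟨left_ne_zero_of_mul hq, right_ne_zero_of_mul hq⟩
  set Gq := G.map e with hGq
  have hGqdeg : Gq.natDegree = G.natDegree :=
    Polynomial.natDegree_map_of_leadingCoeff_ne_zero e heN.2
  have hGq0 : Gq ≠ 0 := by
    intro h0
    apply heN.2
    have : Gq.coeff G.natDegree = e (G.coeff G.natDegree) := Polynomial.coeff_map e _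
    rw [h0, Polynomial.coeff_zero] at this
    exact this.symm
  obtain ⟨π, hπirr, hπdvd⟩ :=
    Polynomial.exists_irreducible_of_natDegree_pos (by omega : 0 < Gq.natDegree)
  haveI := Fact.mk hπirr
  set k₁ := AdjoinRoot π with hk₁
  set pb := AdjoinRoot.powerBasis hπirr.ne_zero with hpb
  refine ⟨k₁, inferInstance, inferInstance, pb.finite, ?_, ?_⟩
  · rw [pb.finrank]
    have h6 : π.natDegree ≤ Gq.natDegree := Polynomial.natDegree_le_of_dvd hπdvd hGq0
    have h7 : pb.dim = π.natDegree := rfl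
    omega
  · set α : k₁ := AdjoinRoot.root π with hα
    set p' : Fin (m + 1) → k₁ := Fin.cons α (fun j => algebraMap k k₁ (q j)) with hp'
    have hev : ∀ f : MvPolynomial (Fin (m + 1)) k,
        MvPolynomial.aeval (p' ∘ σ) f = Polynomial.aeval α (Polynomial.map e (Φ f)) := by
      intro f
      rw [hΦ_apply, ← MvPolynomial.aeval_rename, hp']
      exact aeval_cons_aux α q (MvPolynomial.rename σ f)
    have hπroot : Polynomial.aeval α π = 0 := by
      rw [Polynomial.aeval_def, hα, AdjoinRoot.algebraMap_eq]
      exact AdjoinRoot.eval₂_root π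
    have hGq_root : Polynomial.aeval α Gq = 0 := by
      obtain ⟨t, ht⟩ := hπdvd
      rw [ht, map_mul, hπroot, zero_mul]
    have hFq : Polynomial.aeval α (Polynomial.map e F') ≠ 0 := by
      intro h0
      have hE2 := congrArg (fun z => Polynomial.aeval α (Polynomial.map e z)) E
      simp only [Polynomial.map_add, Polynomial.map_mul, Polynomial.map_C, map_add, map_mul,
        Polynomial.aeval_C, ← hGq, hGq_root, h0, mul_zero, zero_add, add_zero] at hE2
      have : e ((r : R) * (s : R)) = 0 := by
        have hinj : Function.Injective (algebraMap k k₁) := (algebraMap k k₁).injective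
        apply hinj
        rw [map_zero, map_mul, map_mul]
        exact hE2.symm
      exact heN.1 this
    refine ⟨p' ∘ σ, ?_, ?_, i, ?_⟩
    · rw [hev g, ← hG, ← hGq]
      exact hGq_root
    · intro h0
      apply hFq
      rw [hF', ← hev, map_mul, h0, zero_mul]
    · intro h0
      apply hFq
      rw [hF', ← hev, map_mul, h0, mul_zero]
end

section
/- Let k be an algebraically closed field and g, h ∈ k[X₁,…,Xₙ] coprime polynomials with g irreducible and nonconstant. Then there exists a point p ∈ kⁿ with g(p) = 0, h(p) ≠ 0, and grad g(p) ≠ 0, provided char k = 0. -/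
open MvPolynomial

private lemma pderiv_eq_sum' {R : Type} [CommRing R] {n : ℕ} (i : Fin n)
    (g : MvPolynomial (Fin n) R) :
    pderiv i g = ∑ s ∈ g.support, monomial (s - Finsupp.single i 1) (g.coeff s * s i) := by
  conv_lhs => rw [g.as_sum]
  rw [map_sum]
  simp [pderiv_monomial]

private lemma coeff_pderiv' {R : Type} [CommRing R] {n : ℕ} (i : Fin n)
    (g : MvPolynomial (Fin n) R) (m : Fin n →₀ ℕ) (hmi : m i ≠ 0) :
    (pderiv i g).coeff (m - Finsupp.single i 1) = g.coeff m * m i := by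
  classical
  rw [pderiv_eq_sum', coeff_sum]
  rw [Finset.sum_eq_single m]
  · rw [coeff_monomial, if_pos rfl]
  · intro s hs hsm
    rw [coeff_monomial]
    split_ifs with hEq
    · rcases Nat.eq_zero_or_pos (s i) with h0 | hpos
      · simp [h0]
      · exfalso; apply hsm
        ext j
        have hj := DFunLike.congr_fun hEq j
        simp only [Finsupp.tsub_apply] at hj
        rcases eq_or_ne j i with rfl | hji
        · rw [Finsupp.single_eq_same] at hj
          have hmj : m j ≠ 0 := hmi
          omega
        · rw [Finsupp.single_eq_of_ne hji] at hj
          simpa using hj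
    · rfl
  · intro hm
    rw [coeff_monomial, if_pos rfl, MvPolynomial.notMem_support_iff.mp hm, zero_mul]

private lemma totalDegree_eq_zero_of_pderiv' {K : Type} [Field K] [CharZero K] {n : ℕ}
    (g : MvPolynomial (Fin n) K) (h : ∀ i, pderiv i g = 0) : g.totalDegree = 0 := by
  rw [totalDegree_eq_zero_iff]
  intro m hm i
  by_contra hmi
  have hc := coeff_pderiv' i g m hmi
  rw [h i] at hc
  simp only [coeff_zero] at hc
  rcases mul_eq_zero.mp hc.symm with h1 | h1
  · exact (MvPolynomial.mem_support_iff.mp hm) h1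
  · exact hmi (by exact_mod_cast h1)

private lemma degreeOf_pderiv_lt' {R : Type} [CommRing R] {n : ℕ} (i : Fin n)
    (g : MvPolynomial (Fin n) R) (hne : pderiv i g ≠ 0) :
    (pderiv i g).degreeOf i < g.degreeOf i := by
  classical
  have key : ∀ m ∈ (pderiv i g).support, m i + 1 ≤ g.degreeOf i := by
    intro m hm
    have hc : (pderiv i g).coeff m ≠ 0 := MvPolynomial.mem_support_iff.mp hm
    rw [pderiv_eq_sum', coeff_sum] at hc
    obtain ⟨s, hs, hsne⟩ := Finset.exists_ne_zero_of_sum_ne_zero hc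
    rw [coeff_monomial] at hsne
    split_ifs at hsne with hEq
    · have hsi : s i ≠ 0 := by
        intro h0; apply hsne; simp [h0]
      have hmi : m i = s i - 1 := by
        have := DFunLike.congr_fun hEq i
        simp only [Finsupp.tsub_apply, Finsupp.single_eq_same] at this
        omega
      have hle : s i ≤ g.degreeOf i := by
        rw [degreeOf_eq_sup]; exact Finset.le_sup (f := fun m => m i) hs
      omega
    · exact absurd rfl hsne
  have h1 : (pderiv i g).degreeOf i + 1 ≤ g.degreeOf i := by
    obtain ⟨m, hm⟩ := MvPolynomial.support_nonempty.mpr hne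
    have : (pderiv i g).degreeOf i = (pderiv i g).support.sup fun s => s i :=
      degreeOf_eq_sup i _
    rw [this]
    have := Finset.sup_le_iff.mpr (fun b hb => Nat.le_sub_one_of_lt
      (lt_of_lt_of_le (Nat.lt_succ_self _) (key b hb)))
    calc ((pderiv i g).support.sup fun s => s i) + 1
        ≤ (g.degreeOf i - 1) + 1 := by
          have hsup : ((pderiv i g).support.sup fun s => s i) ≤ g.degreeOf i - 1 := by
            apply Finset.sup_le
            intro b hb
            have := key b hb
            omega
          omega
      _ ≤ g.degreeOf i := by
          have := key m hm
          omega
  omega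

private lemma degreeOf_le_of_dvd' {K : Type} [Field K] {n : ℕ}
    {p q : MvPolynomial (Fin n) K} (hpq : p ∣ q) (hq : q ≠ 0) (i : Fin n) :
    p.degreeOf i ≤ q.degreeOf i := by
  obtain ⟨m, rfl⟩ : ∃ m, n = m + 1 := ⟨n - 1, (Nat.succ_pred_eq_of_pos i.pos).symm⟩
  set e := renameEquiv K (Equiv.swap i 0 : Fin (m + 1) ≃ Fin (m + 1)) with he
  have heapp : ∀ r : MvPolynomial (Fin (m+1)) K,
      e r = rename (Equiv.swap i 0 : Fin (m + 1) ≃ Fin (m + 1)) r := fun r => rfl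
  have hinj : Function.Injective (Equiv.swap i 0 : Fin (m + 1) ≃ Fin (m + 1)) :=
    (Equiv.swap i 0).injective
  have hdp : (e p).degreeOf 0 = p.degreeOf i := by
    have := degreeOf_rename_of_injective (p := p) hinj i
    rw [heapp]
    simpa [Equiv.swap_apply_left] using this
  have hdq : (e q).degreeOf 0 = q.degreeOf i := by
    have := degreeOf_rename_of_injective (p := q) hinj i
    rw [heapp]
    simpa [Equiv.swap_apply_left] using this
  rw [← hdp, ← hdq]
  have hdvd : e p ∣ e q := map_dvd _ hpq
  have hqe : e q ≠ 0 := by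
    intro h0
    apply hq
    exact e.injective (by simpa using h0)
  have hdvd2 : (finSuccEquiv K m) (e p) ∣ (finSuccEquiv K m) (e q) := map_dvd _ hdvd
  have hqe2 : (finSuccEquiv K m) (e q) ≠ 0 := by
    intro h0; exact hqe ((map_eq_zero_iff _ (finSuccEquiv K m).injective).mp h0)
  have := Polynomial.natDegree_le_of_dvd hdvd2 hqe2
  rwa [natDegree_finSuccEquiv, natDegree_finSuccEquiv] at this

private lemma pderiv_eq_zero_of_dvd' {K : Type} [Field K] {n : ℕ} (i : Fin n)
    (g : MvPolynomial (Fin n) K) (hdvd : g ∣ pderiv i g) : pderiv i g = 0 := by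
  by_contra hne
  have h1 := degreeOf_le_of_dvd' hdvd hne i
  have h2 := degreeOf_pderiv_lt' i g hne
  omega

/-- Over an algebraically closed field of characteristic zero, for coprime `g, h` with `g`
irreducible and nonconstant there is a point `p` with `g(p) = 0`, `h(p) ≠ 0`, and
`grad g(p) ≠ 0`. -/
theorem exists_smooth_point_algClosed {k : Type} [Field k] [IsAlgClosed k] [CharZero k]
    (n : ℕ) (g h : MvPolynomial (Fin n) k)
    (hcop : IsRelPrime g h) (hirr : Irreducible g) (hnc : 0 < g.totalDegree) :
    ∃ p : Fin n → k,
      MvPolynomial.eval p g = 0 ∧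
      MvPolynomial.eval p h ≠ 0 ∧
      ∃ i : Fin n, MvPolynomial.eval p (MvPolynomial.pderiv i g) ≠ 0 := by
  by_contra hcon
  push_neg at hcon
  -- g is prime
  have hgprime : Prime g := hirr.prime
  have hgne : g ≠ 0 := hgprime.ne_zero
  -- g does not divide h
  have hgh : ¬ g ∣ h := fun hdvd => hgprime.not_isUnit (hcop dvd_rfl hdvd)
  -- the ideal (g) is prime and radical
  have hspanprime : (Ideal.span {g} : Ideal (MvPolynomial (Fin n) k)).IsPrime :=
    (Ideal.span_singleton_prime hgne).mpr hgprime
  -- every partial derivative is divisible by g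
  have hdvd : ∀ i : Fin n, g ∣ pderiv i g := by
    intro i
    have hmem : h * pderiv i g ∈ vanishingIdeal k (zeroLocus k (Ideal.span {g})) := by
      rw [mem_vanishingIdeal_iff]
      intro x hx
      change eval x (h * pderiv i g) = 0
      have hgx : eval x g = 0 := hx g (Ideal.subset_span rfl)
      rw [map_mul]
      rcases eq_or_ne (eval x h) 0 with h0 | h0
      · rw [h0, zero_mul]
      · rw [hcon x hgx h0 i, mul_zero]
    rw [vanishingIdeal_zeroLocus_eq_radical, hspanprime.radical,
      Ideal.mem_span_singleton] at hmem
    exact (hgprime.dvd_mul.mp hmem).resolve_left hgh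
  -- hence all partial derivatives vanish
  have hz : ∀ i : Fin n, pderiv i g = 0 := fun i => pderiv_eq_zero_of_dvd' i g (hdvd i)
  -- so g is constant, contradicting hnc
  have := totalDegree_eq_zero_of_pderiv' g hz
  omega
end

section
/- Let k be a field of characteristic zero, g ∈ k[X][Y] with g(0,0) = 0 and ∂_Y g(0,0) ≠ 0, and let φ ∈ k[[X]] be the unique power series with φ(0)=0 and g(X,φ(X))=0. Define the Newton iteration φ₀ = 0, φ_{ν+1} = φ_ν − g(X,φ_ν)/∂_Y g(X,φ_ν). Then each φ_ν is a well-defined element of k[[X]] and φ_ν ≡ φ mod (X)^{2^ν}, where (X) is the maximal ideal of k[[X]]. -/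
open MvPowerSeries Polynomial

/-- A multivariate power series (finitely many variables) with zero constant
coefficient lies in the ideal generated by the variables. -/
lemma mem_span_X_of_constantCoeff_eq_zero {k : Type} [CommRing k] {m : ℕ}
    {f : MvPowerSeries (Fin m) k}
    (hf : MvPowerSeries.constantCoeff f = 0) :
    f ∈ Ideal.span (Set.range (MvPowerSeries.X : Fin m → MvPowerSeries (Fin m) k)) := by
  classical
  set I := Ideal.span (Set.range (MvPowerSeries.X : Fin m → MvPowerSeries (Fin m) k)) with hI
  -- slice f according to the minimal variable appearing in each monomial
  let F : Fin m → MvPowerSeries (Fin m) k := fun i d =>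
    if d.support.min = (i : WithTop (Fin m)) then MvPowerSeries.coeff d f else 0
  have hsum : f = ∑ i : Fin m, F i := by
    ext d
    rw [map_sum]
    by_cases hd : d = 0
    · subst hd
      rw [Finset.sum_eq_zero]
      · simpa using hf
      · intro i _
        have : (0 : Fin m →₀ ℕ).support.min ≠ (i : WithTop (Fin m)) := by simp
        simp only [MvPowerSeries.coeff_apply, F]
        exact if_neg (t := f 0) this
    · have hne : d.support.Nonempty := Finsupp.support_nonempty_iff.2 hd
      set j := d.support.min' hne with hj
      have hjmin : d.support.min = (j : WithTop (Fin m)) := (Finset.coe_min' hne).symm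
      rw [Finset.sum_eq_single j]
      · simp only [MvPowerSeries.coeff_apply, F]
        exact (if_pos hjmin).symm
      · intro i _ hij
        have : d.support.min ≠ (i : WithTop (Fin m)) := by
          rw [hjmin]
          exact fun h => hij (WithTop.coe_injective h).symm
        simp only [MvPowerSeries.coeff_apply, F]
        exact if_neg this
      · intro h
        exact absurd (Finset.mem_univ j) h
  have hFmem : ∀ i, F i ∈ I := by
    intro i
    have hdvd : (MvPowerSeries.X i : MvPowerSeries (Fin m) k) ∣ F i := by
      rw [MvPowerSeries.X_dvd_iff]
      intro d hdi
      have : d.support.min ≠ (i : WithTop (Fin m)) := by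
        intro h
        have : i ∈ d.support := Finset.mem_of_min h
        rw [Finsupp.mem_support_iff] at this
        exact this hdi
      simp only [MvPowerSeries.coeff_apply, F]
      exact if_neg this
    obtain ⟨q, hq⟩ := hdvd
    rw [hq]
    exact Ideal.mul_mem_right _ _ (Ideal.subset_span ⟨i, rfl⟩)
  rw [hsum]
  exact Ideal.sum_mem _ fun i _ => hFmem i

/-- Newton iteration for the formal implicit function theorem: with
`φ₀ = 0`, `φ_{ν+1} = φ_ν − g(X,φ_ν)/∂_Y g(X,φ_ν)`, each iterate is well defined
(the denominator is a unit in `k[[X]]`) and `φ_ν ≡ φ mod (X)^{2^ν}`. -/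
theorem newton_iteration_quadratic_convergence {k : Type} [Field k] [CharZero k] (m : ℕ)
    (g : Polynomial (MvPolynomial (Fin m) k))
    (hg00 : MvPolynomial.constantCoeff (g.coeff 0) = 0)
    (hgY00 : MvPolynomial.constantCoeff ((Polynomial.derivative g).coeff 0) ≠ 0)
    (φ : MvPowerSeries (Fin m) k)
    (hφ0 : MvPowerSeries.constantCoeff φ = 0)
    (hφroot : Polynomial.eval₂ MvPolynomial.coeToMvPowerSeries.ringHom φ g = 0)
    (Φ : ℕ → MvPowerSeries (Fin m) k)
    (hΦ0 : Φ 0 = 0)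
    (hΦrec : ∀ ν, Φ (ν + 1) = Φ ν -
      (Polynomial.eval₂ MvPolynomial.coeToMvPowerSeries.ringHom (Φ ν) g) *
        Ring.inverse (Polynomial.eval₂ MvPolynomial.coeToMvPowerSeries.ringHom (Φ ν)
          (Polynomial.derivative g))) :
    ∀ ν, IsUnit (Polynomial.eval₂ MvPolynomial.coeToMvPowerSeries.ringHom (Φ ν)
          (Polynomial.derivative g)) ∧
      Φ ν - φ ∈ (Ideal.span (Set.range (MvPowerSeries.X : Fin m → MvPowerSeries (Fin m) k)))
          ^ (2 ^ ν) := by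
  classical
  set f : MvPolynomial (Fin m) k →+* MvPowerSeries (Fin m) k :=
    MvPolynomial.coeToMvPowerSeries.ringHom with hf
  set I := Ideal.span (Set.range (MvPowerSeries.X : Fin m → MvPowerSeries (Fin m) k)) with hI
  -- every element of I has zero constant coefficient
  have hI0 : ∀ x ∈ I, MvPowerSeries.constantCoeff x = 0 := by
    intro x hx
    have hle : I ≤ RingHom.ker (MvPowerSeries.constantCoeff) := by
      rw [hI, Ideal.span_le]
      rintro _ ⟨i, rfl⟩
      simp [RingHom.mem_ker]
    exact hle hx
  -- constant coefficient of an evaluation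
  have hcc : ∀ (p : Polynomial (MvPolynomial (Fin m) k)) (x : MvPowerSeries (Fin m) k),
      MvPowerSeries.constantCoeff x = 0 →
      MvPowerSeries.constantCoeff (p.eval₂ f x) =
        MvPolynomial.constantCoeff (p.coeff 0) := by
    intro p x hx
    rw [Polynomial.hom_eval₂, hx, Polynomial.eval₂_at_zero, RingHom.comp_apply]
    rw [← MvPowerSeries.coeff_zero_eq_constantCoeff_apply, hf,
      MvPolynomial.coeToMvPowerSeries.ringHom_apply, MvPolynomial.coeff_coe,
      MvPolynomial.constantCoeff_eq]
  -- the mapped polynomial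
  set G : Polynomial (MvPowerSeries (Fin m) k) := g.map f with hG
  have hGeval : ∀ x, G.eval x = g.eval₂ f x := fun x => Polynomial.eval_map f x
  have hG'eval : ∀ x, G.derivative.eval x = (Polynomial.derivative g).eval₂ f x := by
    intro x
    rw [hG, Polynomial.derivative_map, Polynomial.eval_map]
  intro ν
  induction ν with
  | zero =>
    constructor
    · rw [MvPowerSeries.isUnit_iff_constantCoeff, hcc _ _ (by rw [hΦ0]; simp)]
      exact isUnit_iff_ne_zero.mpr hgY00
    · rw [hΦ0, pow_zero, pow_one, zero_sub]
      exact I.neg_mem (mem_span_X_of_constantCoeff_eq_zero hφ0)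
  | succ ν ih =>
    obtain ⟨hu, hmem⟩ := ih
    set e : MvPowerSeries (Fin m) k := Φ ν - φ with he
    set u : MvPowerSeries (Fin m) k := (Polynomial.derivative g).eval₂ f (Φ ν) with hud
    obtain ⟨c, hc⟩ := G.binomExpansion φ e
    obtain ⟨d, hd⟩ := G.derivative.evalSubFactor (Φ ν) φ
    have hφe : φ + e = Φ ν := by rw [he]; ring
    have hGφ : G.eval φ = 0 := by rw [hGeval]; exact hφroot
    have huΦ : G.derivative.eval (Φ ν) = u := hG'eval (Φ ν)
    have hvu : u * Ring.inverse u = 1 := Ring.mul_inverse_cancel u hu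
    -- value of g at Φ ν
    have h1 : g.eval₂ f (Φ ν) = u * e + (c - d) * e ^ 2 := by
      rw [← hGeval, ← hφe, hc, hGφ, zero_add]
      linear_combination (-e) * hd + e * huΦ + (d * e) * he
    have hkey : Φ (ν + 1) - φ = ((d - c) * Ring.inverse u) * e ^ 2 := by
      rw [hΦrec, h1, ← hud]
      have : Φ ν - (u * e + (c - d) * e ^ 2) * Ring.inverse u - φ
          = e - (u * e + (c - d) * e ^ 2) * Ring.inverse u := by rw [he]; ring
      rw [this]
      linear_combination (-e) * hvu
    have hmem2 : Φ (ν + 1) - φ ∈ I ^ 2 ^ (ν + 1) := by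
      have h2 : e * e ∈ I ^ 2 ^ ν * I ^ 2 ^ ν := Ideal.mul_mem_mul hmem hmem
      have h3 : I ^ 2 ^ (ν + 1) = I ^ 2 ^ ν * I ^ 2 ^ ν := by
        rw [← pow_add]
        congr 1
        rw [pow_succ]
        ring
      rw [hkey, h3, sq]
      exact Ideal.mul_mem_left _ _ h2
    refine ⟨?_, hmem2⟩
    have hΦν0 : MvPowerSeries.constantCoeff (Φ (ν + 1)) = 0 := by
      have h4 : Φ (ν + 1) - φ ∈ I :=
        Ideal.pow_le_self (pow_ne_zero _ two_ne_zero) hmem2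
      have h5 := hI0 _ h4
      rw [map_sub, hφ0, sub_zero] at h5
      exact h5
    rw [MvPowerSeries.isUnit_iff_constantCoeff, hcc _ _ hΦν0]
    exact isUnit_iff_ne_zero.mpr hgY00
end

section
/- Let f = g^e h with g, h ∈ k[X₁,…,Xₙ] coprime, e ≥ 1, char k = 0, g(0,0)=0, h(0,0)·∂_Y g(0,0) ≠ 0 (writing Y = Xₙ). Define F(X,Y) := f(X, Y+ε) − f(0,ε) over k(ε). Then ∂_Y F(0,0) = e·λ^e·h(0,0)·ε^{e−1} + O(ε^e) where g(0,ε) = λε + O(ε²) with λ = ∂_Y g(0,0) ≠ 0; in particular ∂_Y F(0,0) ≠ 0 in k(ε). -/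
open MvPolynomial

variable {k : Type} [Field k]

private lemma aux_eval0 (n : ℕ) (q : MvPolynomial (Fin (n + 1)) k) :
    Polynomial.eval 0 (aeval (fun i : Fin (n + 1) =>
      if i = Fin.last n then Polynomial.X else (0 : Polynomial k)) q) =
      eval (fun _ => (0 : k)) q := by
  rw [aeval_def]
  rw [show (Polynomial.eval (0:k)) (eval₂ (algebraMap k (Polynomial k))
      (fun i : Fin (n+1) => if i = Fin.last n then Polynomial.X else (0 : Polynomial k)) q)
    = (Polynomial.evalRingHom (0:k)) (eval₂ (algebraMap k (Polynomial k))
      (fun i : Fin (n+1) => if i = Fin.last n then Polynomial.X else (0 : Polynomial k)) q) from rfl]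
  rw [eval₂_comp_left]
  have h1 : (Polynomial.evalRingHom (0:k)).comp (algebraMap k (Polynomial k)) = RingHom.id k := by
    ext a; simp
  have h2 : ((Polynomial.evalRingHom (0:k)) ∘ fun i : Fin (n+1) =>
      if i = Fin.last n then Polynomial.X else (0 : Polynomial k)) = fun _ => (0:k) := by
    funext i
    by_cases hi : i = Fin.last n <;> simp [hi]
  rw [h1, h2]
  rfl

private lemma aux_evalK (n : ℕ) (q : MvPolynomial (Fin (n + 1)) k) :
    eval (fun _ => (0 : RatFunc k))
      (bind₁ (fun i : Fin (n + 1) =>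
          if i = Fin.last n then (X i : MvPolynomial (Fin (n + 1)) (RatFunc k)) + C RatFunc.X
          else X i)
        (map (algebraMap k (RatFunc k)) q)) =
      algebraMap (Polynomial k) (RatFunc k)
        (aeval (fun i : Fin (n + 1) =>
          if i = Fin.last n then Polynomial.X else (0 : Polynomial k)) q) := by
  have h1 : eval (fun _ => (0 : RatFunc k))
      (bind₁ (fun i : Fin (n + 1) =>
          if i = Fin.last n then (X i : MvPolynomial (Fin (n + 1)) (RatFunc k)) + C RatFunc.X
          else X i)
        (map (algebraMap k (RatFunc k)) q)) =
      eval (fun i : Fin (n+1) => eval (fun _ => (0 : RatFunc k))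
          (if i = Fin.last n then (X i : MvPolynomial (Fin (n + 1)) (RatFunc k)) + C RatFunc.X
          else X i))
        (map (algebraMap k (RatFunc k)) q) := eval₂Hom_bind₁ _ _ _ _
  rw [h1]
  have h2 : (fun i : Fin (n+1) => eval (fun _ => (0 : RatFunc k))
      (if i = Fin.last n then (X i : MvPolynomial (Fin (n + 1)) (RatFunc k)) + C RatFunc.X
      else X i)) = fun i => if i = Fin.last n then RatFunc.X else 0 := by
    funext i
    by_cases hi : i = Fin.last n <;> simp [hi]
  rw [h2, eval_map, aeval_def]
  rw [show (algebraMap (Polynomial k) (RatFunc k)) (eval₂ (algebraMap k (Polynomial k))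
      (fun i : Fin (n+1) => if i = Fin.last n then Polynomial.X else (0 : Polynomial k)) q)
    = ((algebraMap (Polynomial k) (RatFunc k)) : Polynomial k →+* RatFunc k) (eval₂ (algebraMap k (Polynomial k))
      (fun i : Fin (n+1) => if i = Fin.last n then Polynomial.X else (0 : Polynomial k)) q) from rfl]
  rw [eval₂_comp_left]
  congr 1
  funext i
  by_cases hi : i = Fin.last n <;> simp [hi, RatFunc.algebraMap_X]

private lemma aux_pderivK (n : ℕ) (q : MvPolynomial (Fin (n + 1)) k) :
    eval (fun _ => (0 : RatFunc k))
      (pderiv (Fin.last n)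
        (bind₁ (fun i : Fin (n + 1) =>
            if i = Fin.last n then (X i : MvPolynomial (Fin (n + 1)) (RatFunc k)) + C RatFunc.X
            else X i)
          (map (algebraMap k (RatFunc k)) q))) =
      algebraMap (Polynomial k) (RatFunc k)
        (aeval (fun i : Fin (n + 1) =>
          if i = Fin.last n then Polynomial.X else (0 : Polynomial k))
          (pderiv (Fin.last n) q)) := by
  induction q using MvPolynomial.induction_on with
  | C a => simp [pderiv_C]
  | add p q hp hq => simp only [map_add, hp, hq]
  | mul_X p i hp =>
    have hb : bind₁ (fun i : Fin (n + 1) =>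
          if i = Fin.last n then (X i : MvPolynomial (Fin (n + 1)) (RatFunc k)) + C RatFunc.X
          else X i) (map (algebraMap k (RatFunc k)) (p * X i)) =
        bind₁ (fun i : Fin (n + 1) =>
          if i = Fin.last n then (X i : MvPolynomial (Fin (n + 1)) (RatFunc k)) + C RatFunc.X
          else X i) (map (algebraMap k (RatFunc k)) p) *
        (if i = Fin.last n then (X i : MvPolynomial (Fin (n + 1)) (RatFunc k)) + C RatFunc.X
          else X i) := by
      rw [map_mul, map_X, map_mul, bind₁_X_right]
    rw [hb, pderiv_mul, map_add, map_mul, map_mul, hp, aux_evalK]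
    by_cases hi : i = Fin.last n
    · subst hi
      simp [pderiv_mul, RatFunc.algebraMap_X]
      ring
    · simp [hi, pderiv_X_of_ne, pderiv_mul]

private lemma aux_deriv (n : ℕ) (q : MvPolynomial (Fin (n + 1)) k) :
    Polynomial.derivative (aeval (fun i : Fin (n + 1) =>
        if i = Fin.last n then Polynomial.X else (0 : Polynomial k)) q) =
      aeval (fun i : Fin (n + 1) =>
        if i = Fin.last n then Polynomial.X else (0 : Polynomial k))
        (pderiv (Fin.last n) q) := by
  induction q using MvPolynomial.induction_on with
  | C a => simp [pderiv_C]
  | add p q hp hq => simp only [map_add, hp, hq]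
  | mul_X p i hp =>
    rw [map_mul, pderiv_mul, Polynomial.derivative_mul, hp, map_add, map_mul, map_mul]
    by_cases hi : i = Fin.last n
    · subst hi
      simp
    · simp [hi, pderiv_X_of_ne]

/-- Perturbation lemma: for `f = g^e h` with `g, h` coprime, `g(0,0) = 0`,
`h(0,0)·∂_Y g(0,0) ≠ 0` (`Y = Xₙ`), the perturbed polynomial
`F(X,Y) := f(X, Y+ε) − f(0,ε)` over `k(ε)` satisfies
`∂_Y F(0,0) = e·λ^e·h(0,0)·ε^{e−1} + O(ε^e)` with `λ = ∂_Y g(0,0)`;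
in particular `∂_Y F(0,0) ≠ 0`. -/
theorem perturbed_partial_derivative {k : Type} [Field k] [CharZero k] (n : ℕ)
    (f g h : MvPolynomial (Fin (n + 1)) k) (e : ℕ) (he : 1 ≤ e)
    (hf : f = g ^ e * h) (hcop : IsRelPrime g h)
    (hg00 : eval (fun _ => (0 : k)) g = 0)
    (hmix : eval (fun _ => (0 : k)) h *
      eval (fun _ => (0 : k)) (pderiv (Fin.last n) g) ≠ 0) :
    let K := RatFunc k
    let fK : MvPolynomial (Fin (n + 1)) K := map (algebraMap k K) f
    let F : MvPolynomial (Fin (n + 1)) K :=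
      bind₁ (fun i => if i = Fin.last n then X i + C RatFunc.X else X i) fK -
        C (eval (fun i => if i = Fin.last n then RatFunc.X else 0) fK)
    let lam : k := eval (fun _ => (0 : k)) (pderiv (Fin.last n) g)
    let h00 : k := eval (fun _ => (0 : k)) h
    (∃ u : Polynomial k,
      eval (fun _ => (0 : K)) (pderiv (Fin.last n) F) =
        algebraMap (Polynomial k) K
          (Polynomial.C ((e : k) * lam ^ e * h00) * Polynomial.X ^ (e - 1) +
            Polynomial.X ^ e * u)) ∧
    eval (fun _ => (0 : K)) (pderiv (Fin.last n) F) ≠ 0 := by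
  intro K fK F lam h00
  classical
  set σ0 : Fin (n + 1) → Polynomial k :=
    fun i => if i = Fin.last n then Polynomial.X else 0 with hσ0
  have hee : e - 1 + 1 = e := by omega
  have e0 : ∀ q : MvPolynomial (Fin (n + 1)) k,
      Polynomial.eval 0 (aeval σ0 q) = eval (fun _ => (0 : k)) q := fun q => aux_eval0 n q
  have dD : ∀ q : MvPolynomial (Fin (n + 1)) k,
      Polynomial.derivative (aeval σ0 q) = aeval σ0 (pderiv (Fin.last n) q) :=
    fun q => aux_deriv n q
  have key : eval (fun _ => (0 : K)) (pderiv (Fin.last n) F)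
      = algebraMap (Polynomial k) K (aeval σ0 (pderiv (Fin.last n) f)) := by
    have h1 : pderiv (Fin.last n) F = pderiv (Fin.last n)
        (bind₁ (fun i => if i = Fin.last n then X i + C RatFunc.X else X i) fK) := by
      show pderiv (Fin.last n) (_ - C _) = _
      rw [map_sub, pderiv_C, sub_zero]
    rw [h1]
    exact aux_pderivK n f
  set G : Polynomial k := aeval σ0 g with hG
  set Hh : Polynomial k := aeval σ0 h with hH
  set G' : Polynomial k := aeval σ0 (pderiv (Fin.last n) g) with hG'
  set H' : Polynomial k := aeval σ0 (pderiv (Fin.last n) h) with hH'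
  have hp : aeval σ0 (pderiv (Fin.last n) f)
      = (e : Polynomial k) * G ^ (e - 1) * G' * Hh + G ^ e * H' := by
    rw [hf, pderiv_mul, pderiv_pow]
    simp only [map_add, map_mul, map_pow, map_natCast]
    rfl
  have hlam : lam ≠ 0 := right_ne_zero_of_mul hmix
  have hh00 : h00 ≠ 0 := left_ne_zero_of_mul hmix
  have he0 : (e : k) ≠ 0 := Nat.cast_ne_zero.mpr (by omega)
  have hG0 : G.coeff 0 = 0 := by
    rw [Polynomial.coeff_zero_eq_eval_zero, hG, e0 g, hg00]
  have hG'0 : G'.eval 0 = lam := by rw [hG', e0]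
  have hH0 : Hh.eval 0 = h00 := by rw [hH, e0]
  have hG1 : G.coeff 1 = lam := by
    have h3 : (Polynomial.derivative G).coeff 0 = G.coeff 1 := by
      rw [Polynomial.coeff_derivative]; simp
    rw [← h3, hG, dD g, Polynomial.coeff_zero_eq_eval_zero, e0]
  have hGX : Polynomial.X * G.divX = G := by
    have h4 := Polynomial.X_mul_divX_add G
    rw [hG0] at h4
    simpa using h4
  have hdG0 : (G.divX).eval 0 = lam := by
    rw [← Polynomial.coeff_zero_eq_eval_zero, Polynomial.coeff_divX]; exact hG1
  set B : Polynomial k :=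
    (e : Polynomial k) * (G.divX) ^ (e - 1) * G' * Hh + Polynomial.X * (G.divX) ^ e * H'
    with hB
  have hXe : Polynomial.X ^ (e - 1) * Polynomial.X = (Polynomial.X : Polynomial k) ^ e := by
    rw [← pow_succ, hee]
  have hpB : aeval σ0 (pderiv (Fin.last n) f) = Polynomial.X ^ (e - 1) * B := by
    rw [hp, ← hGX, mul_pow, mul_pow, hB, ← hXe]
    ring
  have hB0 : B.coeff 0 = (e : k) * lam ^ e * h00 := by
    rw [Polynomial.coeff_zero_eq_eval_zero, hB]
    simp only [Polynomial.eval_add, Polynomial.eval_mul, Polynomial.eval_pow,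
      Polynomial.eval_natCast, Polynomial.eval_X, hdG0, hG'0, hH0, zero_mul, mul_zero, add_zero]
    have hll : lam ^ (e - 1) * lam = lam ^ e := by rw [← pow_succ, hee]
    linear_combination (e : k) * h00 * hll
  have hBdec : B = Polynomial.C ((e : k) * lam ^ e * h00) + Polynomial.X * B.divX := by
    conv_lhs => rw [← Polynomial.X_mul_divX_add B]
    rw [hB0]; ring
  have hpfinal : aeval σ0 (pderiv (Fin.last n) f)
      = Polynomial.C ((e : k) * lam ^ e * h00) * Polynomial.X ^ (e - 1) +
        Polynomial.X ^ e * B.divX := by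
    rw [hpB]
    conv_lhs => rw [hBdec]
    rw [mul_add, mul_comm (Polynomial.X ^ (e - 1))
      (Polynomial.C ((e : k) * lam ^ e * h00)), ← mul_assoc, hXe]
  have hc : (e : k) * lam ^ e * h00 ≠ 0 :=
    mul_ne_zero (mul_ne_zero he0 (pow_ne_zero _ hlam)) hh00
  have hcoeff : (Polynomial.C ((e : k) * lam ^ e * h00) * Polynomial.X ^ (e - 1) +
      Polynomial.X ^ e * B.divX).coeff (e - 1) = (e : k) * lam ^ e * h00 := by
    rw [Polynomial.coeff_add, Polynomial.coeff_C_mul, Polynomial.coeff_X_pow,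
      Polynomial.coeff_X_pow_mul']
    simp [show ¬ e ≤ e - 1 by omega]
  have hpne : aeval σ0 (pderiv (Fin.last n) f) ≠ 0 := by
    rw [hpfinal]
    intro h0
    exact hc (by rw [← hcoeff, h0, Polynomial.coeff_zero])
  refine ⟨⟨B.divX, ?_⟩, ?_⟩
  · rw [key, hpfinal]
  · rw [key]
    intro h0
    exact hpne (RatFunc.algebraMap_injective k (h0.trans (map_zero _).symm))
end

section
/- Let A and B be polynomials in k(X)[T,Y], both monic of the same degree d ≥ 1 in Y, with deg_T A ≤ d and deg_T B ≤ d, and suppose A is irreducible as a polynomial in Y over k(X,T). If there exists ψ ∈ k(X)[T] such that A(T,ψ) ≡ 0 mod T^{2d²+1} and B(T,ψ) ≡ 0 mod T^{2d²+1}, then A = B. -/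
open Polynomial

namespace MPRAux

variable (F : Type*) [Field F]

/-- The `F`-submodule of `F[T][Y]` of polynomials of `Y`-degree `< a` all of whose
coefficients have `T`-degree `< b`. -/
noncomputable def Sab (a b : ℕ) : Submodule F (Polynomial (Polynomial F)) where
  carrier := {P | (∀ i, a ≤ i → P.coeff i = 0) ∧ ∀ i, (P.coeff i).degree < (b : ℕ)}
  add_mem' := by
    rintro P Q ⟨hP1, hP2⟩ ⟨hQ1, hQ2⟩
    refine ⟨fun i hi => by rw [Polynomial.coeff_add, hP1 i hi, hQ1 i hi, add_zero], fun i => ?_⟩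
    rw [Polynomial.coeff_add]
    exact lt_of_le_of_lt (Polynomial.degree_add_le _ _) (max_lt (hP2 i) (hQ2 i))
  zero_mem' := by
    refine ⟨fun i _ => rfl, fun i => ?_⟩
    simp only [Polynomial.coeff_zero, Polynomial.degree_zero]
    exact WithBot.bot_lt_coe b
  smul_mem' := by
    rintro c P ⟨h1, h2⟩
    refine ⟨fun i hi => by rw [Polynomial.coeff_smul, h1 i hi, smul_zero], fun i => ?_⟩
    rw [Polynomial.coeff_smul]
    exact lt_of_le_of_lt (Polynomial.degree_smul_le _ _) (h2 i)

variable {F}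

lemma mem_Sab {a b : ℕ} {P : Polynomial (Polynomial F)} :
    P ∈ Sab F a b ↔ (∀ i, a ≤ i → P.coeff i = 0) ∧ ∀ i, (P.coeff i).degree < (b : ℕ) :=
  Iff.rfl

/-- The basic monomials of `F[T][Y]`. -/
noncomputable def mon (i j : ℕ) : Polynomial (Polynomial F) :=
  Polynomial.monomial i (Polynomial.monomial j (1 : F))

/-- The monomials form a basis of `F[T][Y]` over `F`; index is `(T-exponent, Y-exponent)`. -/
noncomputable def bM : Module.Basis (ℕ × ℕ) F (Polynomial (Polynomial F)) :=
  (Polynomial.basisMonomials F).smulTower (Polynomial.basisMonomials (Polynomial F))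

lemma bM_apply (p : ℕ × ℕ) : (bM : Module.Basis (ℕ × ℕ) F _) p = mon p.2 p.1 := by
  simp only [bM, Module.Basis.smulTower_apply, Polynomial.coe_basisMonomials, mon]
  rw [Polynomial.smul_monomial, smul_eq_mul, mul_one]

lemma Sab_eq_span (a b : ℕ) :
    Sab F a b = Submodule.span F
      (Set.range fun p : Fin a × Fin b => (mon p.1 p.2 : Polynomial (Polynomial F))) := by
  apply le_antisymm
  · rintro P ⟨hP1, hP2⟩
    rcases eq_or_ne P 0 with rfl | hP0
    · exact Submodule.zero_mem _
    have hdeg : P.natDegree < a := by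
      rw [Polynomial.natDegree_lt_iff_degree_lt hP0]
      exact (Polynomial.degree_lt_iff_coeff_zero _ _).mpr fun m hm =>
        hP1 m (by exact_mod_cast hm)
    rw [Polynomial.as_sum_range' P a hdeg]
    refine Submodule.sum_mem _ fun i hi => ?_
    rcases eq_or_ne (P.coeff i) 0 with h0 | h0
    · simp [h0]
    have hdeg2 : (P.coeff i).natDegree < b := by
      rw [Polynomial.natDegree_lt_iff_degree_lt h0]
      exact hP2 i
    rw [Polynomial.as_sum_range' (P.coeff i) b hdeg2, map_sum]
    refine Submodule.sum_mem _ fun j hj => ?_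
    have : (Polynomial.monomial i (Polynomial.monomial j ((P.coeff i).coeff j)) :
        Polynomial (Polynomial F)) = ((P.coeff i).coeff j) • mon i j := by
      rw [mon, Polynomial.smul_monomial, Polynomial.smul_monomial, smul_eq_mul, mul_one]
    rw [this]
    exact Submodule.smul_mem _ _ (Submodule.subset_span
      ⟨(⟨i, Finset.mem_range.mp hi⟩, ⟨j, Finset.mem_range.mp hj⟩), rfl⟩)
  · rw [Submodule.span_le]
    rintro _ ⟨⟨i, j⟩, rfl⟩
    refine ⟨fun n hn => ?_, fun n => ?_⟩
    · simp only [mon, Polynomial.coeff_monomial]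
      rw [if_neg]
      exact fun h => absurd (h ▸ i.isLt) (not_lt.mpr hn)
    · simp only [mon, Polynomial.coeff_monomial]
      split_ifs
      · exact lt_of_le_of_lt (Polynomial.degree_monomial_le _ _) (by exact_mod_cast j.isLt)
      · simp only [Polynomial.degree_zero]
        exact WithBot.bot_lt_coe b

instance Sab_fd (a b : ℕ) : FiniteDimensional F (Sab F a b) := by
  rw [Sab_eq_span]
  exact FiniteDimensional.span_of_finite F (Set.finite_range _)

lemma finrank_Sab (a b : ℕ) : Module.finrank F (Sab F a b) = a * b := by
  rw [Sab_eq_span]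
  have hli : LinearIndependent F
      (fun p : Fin a × Fin b => (mon p.1 p.2 : Polynomial (Polynomial F))) := by
    have : (fun p : Fin a × Fin b => (mon p.1 p.2 : Polynomial (Polynomial F))) =
        (bM : Module.Basis (ℕ × ℕ) F _) ∘ fun p : Fin a × Fin b => ((p.2 : ℕ), (p.1 : ℕ)) := by
      funext p; rw [Function.comp_apply, bM_apply]
    rw [this]
    exact (bM.linearIndependent).comp _ (fun p q h => by
      simp only [Prod.mk.injEq] at h
      exact Prod.ext (Fin.ext h.2) (Fin.ext h.1))
  rw [finrank_span_eq_card hli]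
  simp [Fintype.card_prod]

lemma Sab_mono {a b a' b' : ℕ} (ha : a ≤ a') (hb : b ≤ b') : Sab F a b ≤ Sab F a' b' := by
  rintro P ⟨h1, h2⟩
  exact ⟨fun i hi => h1 i (le_trans ha hi),
    fun i => lt_of_lt_of_le (h2 i) (by exact_mod_cast hb)⟩

lemma mul_mem_Sab {a b c e : ℕ} {u Q : Polynomial (Polynomial F)}
    (hu : u ∈ Sab F (a + 1) (b + 1)) (hQ : Q ∈ Sab F (c + 1) (e + 1)) :
    u * Q ∈ Sab F (a + c + 1) (b + e + 1) := by
  obtain ⟨hu1, hu2⟩ := hu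
  obtain ⟨hQ1, hQ2⟩ := hQ
  constructor
  · intro n hn
    rw [Polynomial.coeff_mul]
    refine Finset.sum_eq_zero fun p hp => ?_
    rcases le_or_gt (a + 1) p.1 with h | h
    · rw [hu1 p.1 h, zero_mul]
    rcases le_or_gt (c + 1) p.2 with h' | h'
    · rw [hQ1 p.2 h', mul_zero]
    exfalso
    have := Finset.HasAntidiagonal.mem_antidiagonal.mp hp
    omega
  · intro n
    rw [Polynomial.coeff_mul]
    refine lt_of_le_of_lt (Polynomial.degree_sum_le _ _) ?_
    rw [Finset.sup_lt_iff (WithBot.bot_lt_coe _)]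
    intro p _
    refine lt_of_le_of_lt (Polynomial.degree_mul_le _ _) ?_
    have h1 := hu2 p.1
    have h2 := hQ2 p.2
    rcases eq_or_ne (u.coeff p.1) 0 with h | h
    · rw [h, Polynomial.degree_zero]
      exact lt_of_le_of_lt bot_le (WithBot.bot_lt_coe _)
    rcases eq_or_ne (Q.coeff p.2) 0 with h' | h'
    · rw [h', Polynomial.degree_zero, WithBot.add_bot]
      exact lt_of_le_of_lt bot_le (WithBot.bot_lt_coe _)
    rw [Polynomial.degree_eq_natDegree h] at h1 ⊢
    rw [Polynomial.degree_eq_natDegree h'] at h2 ⊢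
    have hb1 : (u.coeff p.1).natDegree < b + 1 := by exact_mod_cast h1
    have he1 : (Q.coeff p.2).natDegree < e + 1 := by exact_mod_cast h2
    exact_mod_cast (show (u.coeff p.1).natDegree + (Q.coeff p.2).natDegree < b + e + 1 by omega)

end MPRAux

open MPRAux

/-- The generic form of the theorem, over any field `F`. -/
theorem minimal_polynomial_reconstruction_aux {F : Type*} [Field F] (d : ℕ) (hd : 1 ≤ d)
    (A B : Polynomial (Polynomial F))
    (hAmonic : A.Monic) (hBmonic : B.Monic)
    (hAdeg : A.natDegree = d) (hBdeg : B.natDegree = d)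
    (hAT : ∀ i, (A.coeff i).natDegree ≤ d) (hBT : ∀ i, (B.coeff i).natDegree ≤ d)
    (hAirr : Irreducible (A.map (algebraMap (Polynomial F) (FractionRing (Polynomial F)))))
    (ψ : Polynomial F)
    (hψA : (Polynomial.X : Polynomial F) ^ (2 * d ^ 2 + 1) ∣ Polynomial.eval ψ A)
    (hψB : (Polynomial.X : Polynomial F) ^ (2 * d ^ 2 + 1) ∣ Polynomial.eval ψ B) :
    A = B := by
  by_contra hAB
  classical
  set K := FractionRing (Polynomial F) with hK
  set φ : Polynomial F →+* K := algebraMap (Polynomial F) K with hphi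
  have hφ : Function.Injective φ := IsFractionRing.injective (Polynomial F) K
  set A' := A.map φ with hA'def
  set B' := B.map φ with hB'def
  have hA'monic : A'.Monic := hAmonic.map φ
  have hB'monic : B'.Monic := hBmonic.map φ
  have hA0 : A ≠ 0 := hAmonic.ne_zero
  have hB0 : B ≠ 0 := hBmonic.ne_zero
  have hndA' : A'.natDegree = d := by
    rw [hA'def, Polynomial.natDegree_map_eq_of_injective hφ, hAdeg]
  have hndB' : B'.natDegree = d := by
    rw [hB'def, Polynomial.natDegree_map_eq_of_injective hφ, hBdeg]
  have hnotdvd : ¬ A' ∣ B' := by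
    rintro ⟨q, hq⟩
    have hq0 : q ≠ 0 := by
      rintro rfl
      rw [mul_zero] at hq
      exact hB'monic.ne_zero hq
    have hqmonic : q.Monic := hA'monic.of_mul_monic_left (hq ▸ hB'monic)
    have hnd : q.natDegree = 0 := by
      have h := Polynomial.natDegree_mul hA'monic.ne_zero hq0
      rw [← hq, hndB', hndA'] at h
      omega
    rw [hqmonic.natDegree_eq_zero.mp hnd, mul_one] at hq
    exact hAB (Polynomial.map_injective φ hφ hq.symm)
  have hcop : IsCoprime A' B' := hAirr.coprime_iff_not_dvd.mpr hnotdvd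
  obtain ⟨e, rfl⟩ : ∃ e, d = e + 1 := ⟨d - 1, by omega⟩
  -- membership of A and B in a small box
  have hmemP : ∀ P : Polynomial (Polynomial F), P.natDegree = e + 1 →
      (∀ i, (P.coeff i).natDegree ≤ e + 1) → P ∈ Sab F (e + 2) (e + 2) := by
    intro P hPd hPT
    refine ⟨fun i hi => Polynomial.coeff_eq_zero_of_natDegree_lt (by omega), fun i => ?_⟩
    refine lt_of_le_of_lt Polynomial.degree_le_natDegree ?_
    exact_mod_cast Nat.lt_succ_of_le (hPT i)
  have hAmem : A ∈ Sab F (e + 2) (e + 2) := hmemP A hAdeg hAT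
  have hBmem : B ∈ Sab F (e + 2) (e + 2) := hmemP B hBdeg hBT
  set SM := Sab F (e + 1) (2 * e ^ 2 + 3 * e + 2) with hSM
  set Big := Sab F (2 * e + 2) (2 * e ^ 2 + 4 * e + 3) with hBig
  set W := Sab F 1 (2 * e ^ 2 + 4 * e + 3) with hWdef
  haveI : FiniteDimensional F SM := by rw [hSM]; infer_instance
  haveI : FiniteDimensional F Big := by rw [hBig]; infer_instance
  haveI : FiniteDimensional F W := by rw [hWdef]; infer_instance
  have hmul : ∀ u ∈ SM, ∀ Q, Q ∈ Sab F (e + 2) (e + 2) → u * Q ∈ Big := by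
    intro u hu Q hQ
    have hu' : u ∈ Sab F (e + 1) (2 * e ^ 2 + 3 * e + 1 + 1) :=
      Sab_mono le_rfl (le_of_eq (by ring)) hu
    have hQ' : Q ∈ Sab F (e + 1 + 1) (e + 1 + 1) := Sab_mono (le_of_eq (by ring)) (le_of_eq (by ring)) hQ
    have h := mul_mem_Sab hu' hQ'
    exact Sab_mono (le_of_eq (by ring)) (le_of_eq (by ring)) h
  set f := LinearMap.mulLeft F A with hf
  set g := LinearMap.mulLeft F B with hg
  have hfinj : Function.Injective f := by
    intro x y h
    simp only [hf, LinearMap.mulLeft_apply] at h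
    exact mul_left_cancel₀ hA0 h
  have hginj : Function.Injective g := by
    intro x y h
    simp only [hg, LinearMap.mulLeft_apply] at h
    exact mul_left_cancel₀ hB0 h
  set ImA := SM.map f with hImA
  set ImB := SM.map g with hImB
  haveI : FiniteDimensional F ImA := by rw [hImA]; infer_instance
  haveI : FiniteDimensional F ImB := by rw [hImB]; infer_instance
  have hrA : Module.finrank F ImA = (e + 1) * (2 * e ^ 2 + 3 * e + 2) := by
    rw [← finrank_Sab (F := F) (e + 1) (2 * e ^ 2 + 3 * e + 2)]
    exact ((Submodule.equivMapOfInjective f hfinj SM).symm.finrank_eq)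
  have hrB : Module.finrank F ImB = (e + 1) * (2 * e ^ 2 + 3 * e + 2) := by
    rw [← finrank_Sab (F := F) (e + 1) (2 * e ^ 2 + 3 * e + 2)]
    exact ((Submodule.equivMapOfInjective g hginj SM).symm.finrank_eq)
  -- the two image spaces intersect trivially
  have hdisj : ImA ⊓ ImB = ⊥ := by
    rw [Submodule.eq_bot_iff]
    intro x hx
    obtain ⟨u, hu, hux⟩ := Submodule.mem_map.mp hx.1
    obtain ⟨v, hv, hvx⟩ := Submodule.mem_map.mp hx.2
    simp only [hf, LinearMap.mulLeft_apply] at hux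
    simp only [hg, LinearMap.mulLeft_apply] at hvx
    have heq : A' * u.map φ = B' * v.map φ := by
      rw [hA'def, hB'def, ← Polynomial.map_mul, ← Polynomial.map_mul, hux, hvx]
    have hdvd : A' ∣ B' * v.map φ := ⟨u.map φ, heq.symm⟩
    have hA'v : A' ∣ v.map φ := hcop.dvd_of_dvd_mul_left hdvd
    have hv0 : v.map φ = 0 := by
      by_contra hne
      have hle := Polynomial.natDegree_le_of_dvd hA'v hne
      rw [hndA', Polynomial.natDegree_map_eq_of_injective hφ] at hle
      have hvne : v ≠ 0 := fun h => hne (by rw [h, Polynomial.map_zero])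
      have hvd : v.natDegree < e + 1 := by
        rw [Polynomial.natDegree_lt_iff_degree_lt hvne]
        exact (Polynomial.degree_lt_iff_coeff_zero _ _).mpr fun n hn => (mem_Sab.mp hv).1 n hn
      omega
    have hvz : v = 0 := Polynomial.map_injective φ hφ (by rw [hv0, Polynomial.map_zero])
    rw [← hvx, hvz, mul_zero]
  set Im := ImA ⊔ ImB with hIm
  haveI : FiniteDimensional F Im := Submodule.finiteDimensional_sup ImA ImB
  have hrIm : Module.finrank F Im = 2 * ((e + 1) * (2 * e ^ 2 + 3 * e + 2)) := by
    have h := Submodule.finrank_sup_add_finrank_inf_eq ImA ImB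
    rw [hdisj, finrank_bot, add_zero, hrA, hrB] at h
    rw [hIm, h]
    ring
  have hIm_le : Im ≤ Big := by
    rw [hIm]
    refine sup_le ?_ ?_
    · intro x hx
      obtain ⟨u, hu, rfl⟩ := Submodule.mem_map.mp hx
      show A * u ∈ Big
      rw [mul_comm]
      exact hmul u hu A hAmem
    · intro x hx
      obtain ⟨v, hv, rfl⟩ := Submodule.mem_map.mp hx
      show B * v ∈ Big
      rw [mul_comm]
      exact hmul v hv B hBmem
  have hW_le : W ≤ Big := Sab_mono (by omega) le_rfl
  have hne : Im ⊓ W ≠ ⊥ := by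
    intro hbot
    have h := Submodule.finrank_sup_add_finrank_inf_eq Im W
    rw [hbot, finrank_bot, add_zero, hrIm, hWdef, finrank_Sab] at h
    have hle : Module.finrank F ↥(Im ⊔ W) ≤ Module.finrank F Big :=
      Submodule.finrank_mono (sup_le hIm_le hW_le)
    rw [h, hBig, finrank_Sab] at hle
    nlinarith [hle]
  obtain ⟨P, hPmem, hP0⟩ := Submodule.exists_mem_ne_zero_of_ne_bot hne
  have hPIm : P ∈ Im := hPmem.1
  have hPW : P ∈ W := hPmem.2
  obtain ⟨x, hx, y, hy, hxy⟩ := Submodule.mem_sup.mp hPIm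
  obtain ⟨u, hu, rfl⟩ := Submodule.mem_map.mp hx
  obtain ⟨v, hv, rfl⟩ := Submodule.mem_map.mp hy
  have hPeq : A * u + B * v = P := by
    simpa only [hf, hg, LinearMap.mulLeft_apply] using hxy
  set c := P.coeff 0 with hc
  have hPC : P = Polynomial.C c := by
    apply Polynomial.ext
    intro n
    cases n with
    | zero => simp [hc]
    | succ n =>
      rw [Polynomial.coeff_C, if_neg (Nat.succ_ne_zero n)]
      exact (mem_Sab.mp hPW).1 (n + 1) (by omega)
  have hc0 : c ≠ 0 := fun h => hP0 (by rw [hPC, h, map_zero])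
  have hcdeg : c.degree < ((2 * e ^ 2 + 4 * e + 3 : ℕ) : WithBot ℕ) := (mem_Sab.mp hPW).2 0
  have hdvdP : (Polynomial.X : Polynomial F) ^ (2 * (e + 1) ^ 2 + 1) ∣ Polynomial.eval ψ P := by
    rw [← hPeq, Polynomial.eval_add, Polynomial.eval_mul, Polynomial.eval_mul]
    exact dvd_add (hψA.mul_right _) (hψB.mul_right _)
  have hdvdc : (Polynomial.X : Polynomial F) ^ (2 * (e + 1) ^ 2 + 1) ∣ c := by
    rw [hPC, Polynomial.eval_C] at hdvdP
    exact hdvdP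
  have hlb := Polynomial.natDegree_le_of_dvd hdvdc hc0
  rw [Polynomial.natDegree_X_pow] at hlb
  have hub : c.natDegree < 2 * e ^ 2 + 4 * e + 3 := by
    rw [Polynomial.natDegree_lt_iff_degree_lt hc0]
    exact_mod_cast hcdeg
  have harith : 2 * (e + 1) ^ 2 + 1 = 2 * e ^ 2 + 4 * e + 3 := by ring
  omega

/-- Two polynomials `A, B ∈ k(X)[T,Y]`, monic of the same degree `d ≥ 1` in `Y`, of
`T`-degree at most `d`, with `A` irreducible over `k(X,T)`, which share an approximate
common root `ψ` modulo `T^{2d²+1}`, must be equal. -/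
theorem minimal_polynomial_reconstruction {k : Type} [Field k] (m : ℕ) (d : ℕ) (hd : 1 ≤ d)
    (A B : Polynomial (Polynomial (FractionRing (MvPolynomial (Fin m) k))))
    (hAmonic : A.Monic) (hBmonic : B.Monic)
    (hAdeg : A.natDegree = d) (hBdeg : B.natDegree = d)
    (hAT : ∀ i, (A.coeff i).natDegree ≤ d) (hBT : ∀ i, (B.coeff i).natDegree ≤ d)
    (hAirr : Irreducible (A.map (algebraMap
      (Polynomial (FractionRing (MvPolynomial (Fin m) k)))
      (FractionRing (Polynomial (FractionRing (MvPolynomial (Fin m) k)))))))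
    (ψ : Polynomial (FractionRing (MvPolynomial (Fin m) k)))
    (hψA : (Polynomial.X : Polynomial (FractionRing (MvPolynomial (Fin m) k))) ^
      (2 * d ^ 2 + 1) ∣ Polynomial.eval ψ A)
    (hψB : (Polynomial.X : Polynomial (FractionRing (MvPolynomial (Fin m) k))) ^
      (2 * d ^ 2 + 1) ∣ Polynomial.eval ψ B) :
    A = B :=
  minimal_polynomial_reconstruction_aux d hd A B hAmonic hBmonic hAdeg hBdeg hAT hBT hAirr
    ψ hψA hψB
end

section
/- Define f_n := ∏_{i=1}^{n} (Σ_{j=1}^{n} X_{ij} Y^{2^{j−1}}) ∈ k[X_{ij}, Y]. Then the coefficient of Y^{2ⁿ−1} in f_n, as a polynomial in the variables X_{ij}, equals the permanent of the n×n matrix (X_{ij}). -/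
open Finset

/-- Key binary-representation lemma: if `∑_{j<n} d j * 2^j = 2^n - 1` then
`n ≤ ∑ d j`, and in case of equality every `d j = 1`. -/
lemma two_pow_sum_aux : ∀ (n : ℕ) (d : ℕ → ℕ),
    (∑ j ∈ range n, d j * 2 ^ j) = 2 ^ n - 1 →
    n ≤ ∑ j ∈ range n, d j ∧
      ((∑ j ∈ range n, d j) = n → ∀ j < n, d j = 1) := by
  intro n
  induction n with
  | zero => intro d _; simp
  | succ n ih =>
    intro d hd
    rw [Finset.sum_range_succ'] at hd
    have h2 : ∑ j ∈ range n, d (j + 1) * 2 ^ (j + 1)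
        = 2 * ∑ j ∈ range n, d (j + 1) * 2 ^ j := by
      rw [Finset.mul_sum]; apply Finset.sum_congr rfl; intros; ring
    rw [h2] at hd
    have hT : 1 ≤ 2 ^ n := Nat.one_le_two_pow
    have hpow : 2 ^ (n + 1) = 2 * 2 ^ n := by ring
    rw [hpow] at hd
    set S := ∑ j ∈ range n, d (j + 1) * 2 ^ j with hS
    -- d 0 odd
    obtain ⟨a, ha⟩ : ∃ a, d 0 = 2 * a + 1 := ⟨d 0 / 2, by omega⟩
    have hSa : a + S = 2 ^ n - 1 := by omega
    set e : ℕ → ℕ := fun j => (if j = 0 then a else 0) + d (j + 1) with he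
    have hesum : ∑ j ∈ range n, e j * 2 ^ j = a + S := by
      have : ∑ j ∈ range n, e j * 2 ^ j
          = ∑ j ∈ range n, ((if j = 0 then a * 2 ^ j else 0) + d (j + 1) * 2 ^ j) := by
        apply Finset.sum_congr rfl; intro j _
        by_cases h : j = 0 <;> simp [he, h]
      rw [this, Finset.sum_add_distrib, Finset.sum_ite_eq' (range n) 0 (fun j => a * 2 ^ j)]
      rcases Nat.eq_zero_or_pos n with h | h
      · subst h; simp at hSa ⊢; omega
      · simp [Finset.mem_range.mpr h, hS]
    have hecount : ∑ j ∈ range n, e j = a + ∑ j ∈ range n, d (j + 1) := by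
      have : ∑ j ∈ range n, e j
          = ∑ j ∈ range n, ((if j = 0 then a else 0) + d (j + 1)) := rfl
      rw [this, Finset.sum_add_distrib, Finset.sum_ite_eq' (range n) 0 (fun _ => a)]
      rcases Nat.eq_zero_or_pos n with h | h
      · subst h; simp at hSa ⊢; omega
      · simp [Finset.mem_range.mpr h]
    obtain ⟨hle, heq⟩ := ih e (by rw [hesum, hSa])
    rw [Finset.sum_range_succ'] at *
    constructor
    · omega
    · intro htot j hj
      have ha0 : a = 0 := by omega
      have hecnt : ∑ j ∈ range n, e j = n := by omega
      have := heq hecnt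
      rcases Nat.eq_zero_or_pos j with h0 | h0
      · subst h0; omega
      · obtain ⟨j', rfl⟩ : ∃ j', j = j' + 1 := ⟨j - 1, by omega⟩
        have hej := heq hecnt j' (by omega)
        simp only [he, ha0] at hej
        by_cases h : j' = 0
        · subst h; simpa using hej
        · simpa [h] using hej

lemma sum_two_pow (n : ℕ) : ∑ j ∈ range n, 2 ^ j = 2 ^ n - 1 := by
  induction n with
  | zero => simp
  | succ n ih =>
    rw [Finset.sum_range_succ, ih]
    have : 1 ≤ 2 ^ n := Nat.one_le_two_pow
    have : 2 ^ (n + 1) = 2 * 2 ^ n := by ring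
    omega

/-- If `∑ i, 2^(g i) = 2^n - 1` for `g : Fin n → Fin n` then `g` is bijective. -/
lemma bijective_of_sum {n : ℕ} (g : Fin n → Fin n)
    (h : ∑ i : Fin n, 2 ^ (g i : ℕ) = 2 ^ n - 1) : Function.Bijective g := by
  set d : ℕ → ℕ := fun j => (univ.filter fun i : Fin n => (g i : ℕ) = j).card with hd
  have hfib : ∑ j ∈ range n, d j * 2 ^ j = ∑ i : Fin n, 2 ^ (g i : ℕ) := by
    rw [← Finset.sum_fiberwise' univ g (fun j : Fin n => 2 ^ (j : ℕ)),
      ← Fin.sum_univ_eq_sum_range (fun j => d j * 2 ^ j) n]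
    apply Finset.sum_congr rfl
    intro b _
    rw [Finset.sum_const, smul_eq_mul]
    congr 1
    simp [hd, Fin.val_eq_val]
  have hcount : ∑ j ∈ range n, d j = n := by
    rw [← Fin.sum_univ_eq_sum_range (fun j => d j) n]
    have hc := Finset.card_eq_sum_card_fiberwise
      (f := g) (s := univ) (t := univ) (fun i _ => Finset.mem_univ (g i))
    simp only [Finset.card_univ, Fintype.card_fin] at hc
    conv_rhs => rw [hc]
    apply Finset.sum_congr rfl
    intro b _
    simp [hd, Fin.val_eq_val]
  obtain ⟨_, hone⟩ := two_pow_sum_aux n d (by rw [hfib, h])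
  have hone := hone hcount
  have hinj : Function.Injective g := by
    intro i1 i2 h12
    by_contra hne
    have h1 : i1 ∈ univ.filter fun i : Fin n => (g i : ℕ) = (g i1 : ℕ) := by simp
    have h2 : i2 ∈ univ.filter fun i : Fin n => (g i : ℕ) = (g i1 : ℕ) := by simp [h12]
    have hlt : 1 < (univ.filter fun i : Fin n => (g i : ℕ) = (g i1 : ℕ)).card :=
      Finset.one_lt_card.mpr ⟨i1, h1, i2, h2, fun h => hne h⟩
    have hone' := hone (g i1 : ℕ) (g i1).isLt
    simp only [hd] at hone'
    omega
  exact (Finite.injective_iff_bijective).mp hinj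

lemma sum_two_pow_perm {n : ℕ} (σ : Equiv.Perm (Fin n)) :
    ∑ i : Fin n, 2 ^ ((σ i : ℕ)) = 2 ^ n - 1 := by
  rw [Equiv.sum_comp σ (fun j : Fin n => 2 ^ (j : ℕ)),
    Fin.sum_univ_eq_sum_range (fun j => 2 ^ j) n, sum_two_pow]

/-- The coefficient of `Y^{2ⁿ−1}` in `f_n := ∏_{i=1}^{n} (Σ_{j=1}^{n} X_{ij} Y^{2^{j−1}})`
is the permanent of the `n×n` matrix `(X_{ij})`. -/
theorem coeff_eq_permanent {k : Type} [Field k] (n : ℕ) :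
    (∏ i : Fin n, ∑ j : Fin n,
        Polynomial.C (MvPolynomial.X (R := k) (i, j)) *
          (Polynomial.X : Polynomial (MvPolynomial (Fin n × Fin n) k)) ^ (2 ^ (j : ℕ))).coeff
      (2 ^ n - 1) =
    Matrix.permanent (Matrix.of fun i j : Fin n => MvPolynomial.X (R := k) (i, j)) := by
  rw [Fintype.prod_sum, Polynomial.finset_sum_coeff]
  have step : ∀ g : Fin n → Fin n,
      (∏ i, Polynomial.C (MvPolynomial.X (R := k) (i, g i)) *
          (Polynomial.X : Polynomial (MvPolynomial (Fin n × Fin n) k)) ^ (2 ^ (g i : ℕ))).coeff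
        (2 ^ n - 1)
      = if (∑ i : Fin n, 2 ^ (g i : ℕ)) = 2 ^ n - 1
          then ∏ i, MvPolynomial.X (R := k) (i, g i) else 0 := by
    intro g
    rw [Finset.prod_mul_distrib, ← map_prod, Finset.prod_pow_eq_pow_sum,
      Polynomial.coeff_C_mul_X_pow]
    simp [eq_comm]
  simp_rw [step]
  rw [Finset.sum_ite, Finset.sum_const_zero, add_zero]
  rw [Matrix.permanent]
  set M := Matrix.of fun i j : Fin n => MvPolynomial.X (R := k) (i, j) with hM
  have key : ∀ τ : Equiv.Perm (Fin n), ∏ i, M (τ⁻¹ i) i = ∏ i, M i (τ i) := by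
    intro τ
    rw [← Equiv.prod_comp τ (fun i => M (τ⁻¹ i) i)]
    simp
  refine Finset.sum_bij'
    (fun (g : Fin n → Fin n) (hg : g ∈ Finset.filter _ Finset.univ) =>
      (Equiv.ofBijective g (bijective_of_sum g (by simpa using hg)))⁻¹)
    (fun (σ : Equiv.Perm (Fin n)) _ => ⇑σ⁻¹) ?_ ?_ ?_ ?_ ?_
  · intro a ha; exact Finset.mem_univ _
  · intro σ _
    simp only [Finset.mem_filter, Finset.mem_univ, true_and]
    exact sum_two_pow_perm σ⁻¹
  · intro g hg
    funext i
    simp [Equiv.ofBijective]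
  · intro σ _
    apply Equiv.ext
    intro i
    rw [Equiv.Perm.inv_eq_iff_eq]
    exact (σ.symm_apply_apply i).symm
  · intro g hg
    have := key (Equiv.ofBijective g (bijective_of_sum g (by simpa using hg)))
    rw [this]
    rfl
end

section
/- Let R ⊂ k(ε) be the local ring of rational functions defined at ε = 0 over a field k. Let Φ ∈ k(ε,δ) be a rational function such that Φ, viewed as a rational function in δ over k(ε), is defined at δ = 0 with value Φ_{δ=0}, and such that Φ_{δ=0} is defined at ε = 0 with value λ ∈ k. Then for all sufficiently large N ∈ ℕ, the rational function ε ↦ Φ(ε, ε^N) is defined at ε = 0 with value λ. -/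
open Polynomial

/-- If `r * g = f` (with `g ≠ 0`, viewed in `RatFunc k`), then `g = r.denom * t` and
`f = r.num * t` for some polynomial `t`. -/
lemma ratfunc_exists_factor {k : Type} [Field k] (r : RatFunc k) (f g : Polynomial k)
    (hg : g ≠ 0)
    (h : r * algebraMap (Polynomial k) (RatFunc k) g = algebraMap (Polynomial k) (RatFunc k) f) :
    ∃ t : Polynomial k, g = r.denom * t ∧ f = r.num * t := by
  have hd0 : r.denom ≠ 0 := r.denom_ne_zero
  have hda : algebraMap (Polynomial k) (RatFunc k) r.denom ≠ 0 :=
    RatFunc.algebraMap_ne_zero hd0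
  have key : r.num * g = f * r.denom := by
    have hrd : r * algebraMap (Polynomial k) (RatFunc k) r.denom =
        algebraMap (Polynomial k) (RatFunc k) r.num := by
      exact ((div_eq_iff hda).mp (RatFunc.num_div_denom r)).symm
    apply RatFunc.algebraMap_injective k
    rw [map_mul, map_mul]
    linear_combination (-(algebraMap (Polynomial k) (RatFunc k) g)) * hrd +
      algebraMap (Polynomial k) (RatFunc k) r.denom * h
  have hdvd : r.denom ∣ g :=
    (r.isCoprime_num_denom.symm).dvd_of_dvd_mul_left ⟨f, key.trans (mul_comm f r.denom)⟩
  obtain ⟨t, ht⟩ := hdvd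
  refine ⟨t, ht, ?_⟩
  have : f * r.denom = r.num * t * r.denom := by rw [← key, ht]; ring
  exact mul_right_cancel₀ hd0 this

/-- Let `Φ ∈ k(ε,δ)` be defined at `δ = 0` (over `k(ε)`) with value `Φ_{δ=0}`, and let
`Φ_{δ=0}` be defined at `ε = 0` with value `λ ∈ k`. Then for all sufficiently large `N`,
the rational function `ε ↦ Φ(ε, ε^N)` is defined at `ε = 0` with value `λ`. -/
theorem substitution_defined_for_large_N {k : Type} [Field k]
    (Φ : RatFunc (RatFunc k)) (lam : k)
    (hδ : Polynomial.eval (0 : RatFunc k) Φ.denom ≠ 0)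
    (hε : Polynomial.eval (0 : k)
      (RatFunc.eval (RingHom.id (RatFunc k)) 0 Φ).denom ≠ 0)
    (hval : RatFunc.eval (RingHom.id k) 0
      (RatFunc.eval (RingHom.id (RatFunc k)) 0 Φ) = lam) :
    ∃ N₀ : ℕ, ∀ N ≥ N₀,
      Polynomial.eval ((RatFunc.X : RatFunc k) ^ N) Φ.denom ≠ 0 ∧
      Polynomial.eval (0 : k)
        (RatFunc.eval (RingHom.id (RatFunc k)) ((RatFunc.X : RatFunc k) ^ N) Φ).denom ≠ 0 ∧
      RatFunc.eval (RingHom.id k) 0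
        (RatFunc.eval (RingHom.id (RatFunc k)) ((RatFunc.X : RatFunc k) ^ N) Φ) = lam := by
  classical
  set alg := algebraMap (Polynomial k) (RatFunc k) with halg
  -- integer normalizations of num and denom of Φ
  set P := IsLocalization.integerNormalization (nonZeroDivisors (Polynomial k)) Φ.num with hP
  set Q := IsLocalization.integerNormalization (nonZeroDivisors (Polynomial k)) Φ.denom with hQ
  obtain ⟨cA, hcAm, hcA⟩ :=
    IsLocalization.integerNormalization_spec (nonZeroDivisors (Polynomial k)) Φ.num
  obtain ⟨cB, hcBm, hcB⟩ :=
    IsLocalization.integerNormalization_spec (nonZeroDivisors (Polynomial k)) Φ.denom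
  have hcA0 : (cA : Polynomial k) ≠ 0 := nonZeroDivisors.ne_zero hcAm
  have hcB0 : (cB : Polynomial k) ≠ 0 := nonZeroDivisors.ne_zero hcBm
  have hmapP : P.map alg = Polynomial.C (alg cA) * Φ.num := by
    rw [hcA, Algebra.smul_def, Polynomial.algebraMap_apply]
  have hmapQ : Q.map alg = Polynomial.C (alg cB) * Φ.denom := by
    rw [hcB, Algebra.smul_def, Polynomial.algebraMap_apply]
  have evalP : ∀ y : Polynomial k, alg (P.eval y) = alg cA * Φ.num.eval (alg y) := by
    intro y
    rw [← Polynomial.eval₂_at_apply, Polynomial.eval₂_eq_eval_map, hmapP, eval_C_mul]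
  have evalQ : ∀ y : Polynomial k, alg (Q.eval y) = alg cB * Φ.denom.eval (alg y) := by
    intro y
    rw [← Polynomial.eval₂_at_apply, Polynomial.eval₂_eq_eval_map, hmapQ, eval_C_mul]
  set KK := alg cA * alg cB with hKKdef
  have hKK : KK ≠ 0 :=
    mul_ne_zero (RatFunc.algebraMap_ne_zero hcA0) (RatFunc.algebraMap_ne_zero hcB0)
  -- the "constant terms"
  set α' : Polynomial k := cB * P.coeff 0 with hα'
  set β' : Polynomial k := cA * Q.coeff 0 with hβ'
  have halgzero : alg 0 = 0 := map_zero alg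
  have hα'eq : alg α' = KK * Φ.num.eval 0 := by
    have := evalP 0
    rw [halgzero] at this
    rw [hα', map_mul, coeff_zero_eq_eval_zero, this, hKKdef]
    ring
  have hβ'eq : alg β' = KK * Φ.denom.eval 0 := by
    have := evalQ 0
    rw [halgzero] at this
    rw [hβ', map_mul, coeff_zero_eq_eval_zero, this, hKKdef]
    ring
  set Ψ := RatFunc.eval (RingHom.id (RatFunc k)) 0 Φ with hΨdef
  have hΨ : Ψ = Φ.num.eval 0 / Φ.denom.eval 0 := by
    simp only [hΨdef, RatFunc.eval, Polynomial.eval₂_at_apply]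
    rfl
  have hβ'0 : β' ≠ 0 := by
    intro h0
    have : alg β' = 0 := by rw [h0, halgzero]
    rw [hβ'eq] at this
    exact (mul_ne_zero hKK hδ) this
  have hΨβ : Ψ * alg β' = alg α' := by
    rw [hΨ, hβ'eq, hα'eq]
    field_simp
  obtain ⟨t, htβ, htα⟩ := ratfunc_exists_factor Ψ α' β' hβ'0 hΨβ
  have ht0 : t ≠ 0 := by
    intro h0; apply hβ'0; rw [htβ, h0, mul_zero]
  set m := t.natTrailingDegree with hm
  obtain ⟨s, hs⟩ : (Polynomial.X : Polynomial k) ^ m ∣ t :=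
    Polynomial.X_pow_dvd_iff.mpr fun d hd => coeff_eq_zero_of_lt_natTrailingDegree hd
  have hs0 : s.eval 0 ≠ 0 := by
    have hcoeff : t.coeff m = s.coeff 0 := by
      rw [hs]
      have := Polynomial.coeff_X_pow_mul s m 0
      simpa using this
    have htc : t.coeff m ≠ 0 := by
      rw [hm]
      exact fun h => ht0 (Polynomial.trailingCoeff_eq_zero.mp h)
    rw [← coeff_zero_eq_eval_zero, ← hcoeff]
    exact htc
  have hue : Ψ.num.eval 0 / Ψ.denom.eval 0 = lam := by
    rw [← hval]
    simp only [hΨdef, RatFunc.eval]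
    rfl
  -- main construction
  refine ⟨m + 1, fun N hN => ?_⟩
  have hNm : m < N := hN
  set pN : Polynomial k := cB * P.eval (Polynomial.X ^ N) with hpNdef
  set qN : Polynomial k := cA * Q.eval (Polynomial.X ^ N) with hqNdef
  have halgXN : alg (Polynomial.X ^ N) = (RatFunc.X : RatFunc k) ^ N := by
    rw [map_pow, RatFunc.algebraMap_X]
  have hpN : alg pN = KK * Φ.num.eval ((RatFunc.X : RatFunc k) ^ N) := by
    rw [hpNdef, map_mul, evalP, halgXN, hKKdef]; ring
  have hqN : alg qN = KK * Φ.denom.eval ((RatFunc.X : RatFunc k) ^ N) := by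
    rw [hqNdef, map_mul, evalQ, halgXN, hKKdef]; ring
  -- X^N divides the differences
  obtain ⟨w, hw⟩ : (Polynomial.X : Polynomial k) ^ N ∣ qN - β' := by
    have h1 : (Polynomial.X : Polynomial k) ^ N ∣
        Q.eval (Polynomial.X ^ N) - Q.eval 0 := by
      have := Polynomial.sub_dvd_eval_sub (Polynomial.X ^ N) (0 : Polynomial k) Q
      rwa [sub_zero] at this
    have h2 : qN - β' = cA * (Q.eval (Polynomial.X ^ N) - Q.eval 0) := by
      rw [hqNdef, hβ', coeff_zero_eq_eval_zero]; ring
    rw [h2]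
    exact Dvd.dvd.mul_left h1 _
  obtain ⟨v, hv⟩ : (Polynomial.X : Polynomial k) ^ N ∣ pN - α' := by
    have h1 : (Polynomial.X : Polynomial k) ^ N ∣
        P.eval (Polynomial.X ^ N) - P.eval 0 := by
      have := Polynomial.sub_dvd_eval_sub (Polynomial.X ^ N) (0 : Polynomial k) P
      rwa [sub_zero] at this
    have h2 : pN - α' = cB * (P.eval (Polynomial.X ^ N) - P.eval 0) := by
      rw [hpNdef, hα', coeff_zero_eq_eval_zero]; ring
    rw [h2]
    exact Dvd.dvd.mul_left h1 _
  have hx : (Polynomial.X : Polynomial k) ^ m * Polynomial.X ^ (N - m) = Polynomial.X ^ N := by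
    rw [← pow_add]; congr 1; omega
  set g : Polynomial k := Ψ.denom * s + Polynomial.X ^ (N - m) * w with hgdef
  set f : Polynomial k := Ψ.num * s + Polynomial.X ^ (N - m) * v with hfdef
  have hqNg : qN = Polynomial.X ^ m * g := by
    have hw' : qN = β' + Polynomial.X ^ N * w := by rw [← hw]; ring
    rw [hw', htβ, hs, hgdef]
    linear_combination (-w) * hx
  have hpNf : pN = Polynomial.X ^ m * f := by
    have hv' : pN = α' + Polynomial.X ^ N * v := by rw [← hv]; ring
    rw [hv', htα, hs, hfdef]
    linear_combination (-v) * hx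
  have hNm0 : N - m ≠ 0 := by omega
  have hgeval : g.eval 0 = Ψ.denom.eval 0 * s.eval 0 := by
    simp [hgdef, zero_pow hNm0]
  have hfeval : f.eval 0 = Ψ.num.eval 0 * s.eval 0 := by
    simp [hfdef, zero_pow hNm0]
  have hg0 : g.eval 0 ≠ 0 := by rw [hgeval]; exact mul_ne_zero hε hs0
  have hgne : g ≠ 0 := fun h0 => hg0 (by rw [h0]; simp)
  have hqN0 : qN ≠ 0 := by
    rw [hqNg]
    exact mul_ne_zero (pow_ne_zero _ Polynomial.X_ne_zero) hgne
  -- condition 1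
  have hBN : Φ.denom.eval ((RatFunc.X : RatFunc k) ^ N) ≠ 0 := by
    intro h0
    apply RatFunc.algebraMap_ne_zero hqN0
    rw [hqN, h0, mul_zero]
  refine ⟨hBN, ?_⟩
  set ΦN := RatFunc.eval (RingHom.id (RatFunc k)) ((RatFunc.X : RatFunc k) ^ N) Φ with hΦNdef
  have hΦN : ΦN = Φ.num.eval ((RatFunc.X : RatFunc k) ^ N) /
      Φ.denom.eval ((RatFunc.X : RatFunc k) ^ N) := by
    simp only [hΦNdef, RatFunc.eval]
    rfl
  have hXm : alg (Polynomial.X ^ m) ≠ 0 :=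
    RatFunc.algebraMap_ne_zero (pow_ne_zero _ Polynomial.X_ne_zero)
  have E1 : KK * Φ.num.eval ((RatFunc.X : RatFunc k) ^ N) = alg (Polynomial.X ^ m) * alg f := by
    rw [← hpN, hpNf, map_mul]
  have E2 : KK * Φ.denom.eval ((RatFunc.X : RatFunc k) ^ N) = alg (Polynomial.X ^ m) * alg g := by
    rw [← hqN, hqNg, map_mul]
  have hcancel : Φ.num.eval ((RatFunc.X : RatFunc k) ^ N) * alg g =
      alg f * Φ.denom.eval ((RatFunc.X : RatFunc k) ^ N) := by
    apply mul_right_cancel₀ (mul_ne_zero hKK hXm)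
    linear_combination (alg (Polynomial.X ^ m) * alg g) * E1 -
      (alg (Polynomial.X ^ m) * alg f) * E2
  have hΦNg : ΦN * alg g = alg f := by
    rw [hΦN, div_mul_eq_mul_div, div_eq_iff hBN]
    exact hcancel
  obtain ⟨t2, ht2g, ht2f⟩ := ratfunc_exists_factor ΦN f g hgne hΦNg
  have hgsplit : g.eval 0 = ΦN.denom.eval 0 * t2.eval 0 := by rw [ht2g]; simp
  have hfsplit : f.eval 0 = ΦN.num.eval 0 * t2.eval 0 := by rw [ht2f]; simp
  have hdenΦN : ΦN.denom.eval 0 ≠ 0 := by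
    intro h0
    apply hg0
    rw [hgsplit, h0, zero_mul]
  have ht20 : t2.eval 0 ≠ 0 := by
    intro h0
    apply hg0
    rw [hgsplit, h0, mul_zero]
  refine ⟨hdenΦN, ?_⟩
  have hvalΦN : RatFunc.eval (RingHom.id k) 0 ΦN = ΦN.num.eval 0 / ΦN.denom.eval 0 := by
    simp only [RatFunc.eval]
    rfl
  rw [hvalΦN]
  have h1 : ΦN.num.eval 0 / ΦN.denom.eval 0 = f.eval 0 / g.eval 0 := by
    rw [hfsplit, hgsplit, mul_div_mul_right _ _ ht20]
  have h2 : f.eval 0 / g.eval 0 = Ψ.num.eval 0 / Ψ.denom.eval 0 := by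
    rw [hfeval, hgeval, mul_div_mul_right _ _ hs0]
  rw [h1, h2, hue]
end

section
/- Over a field k of characteristic zero, let f = g^e h in k[X₁,…,X_{n−1}][Y] with g, h monic-compatible: g monic in Y. Write homogeneous decompositions (in the X-variables) f = Σ f^{(δ)}, g = Σ g^{(δ)}, h = Σ h^{(δ)}. For s ≥ 0 set F := (Σ_{δ≤s} g^{(δ)})^e · (Σ_{δ≤s} h^{(δ)}) and Δ^{(s+1)} := f^{(s+1)} − F^{(s+1)}. Then Δ^{(s+1)} = e·(g^{(0)})^{e−1}·g^{(s+1)}·h^{(0)} + (g^{(0)})^e·h^{(s+1)} in k[X][Y]. -/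
open Polynomial

/-- The part of `a ∈ k[X][Y]` whose `X`-coefficients are homogeneous of degree `δ`. -/
noncomputable def homPart {k : Type} [Field k] (m : ℕ) (δ : ℕ)
    (a : Polynomial (MvPolynomial (Fin m) k)) : Polynomial (MvPolynomial (Fin m) k) :=
  a.sum fun i c => Polynomial.monomial i (MvPolynomial.homogeneousComponent δ c)

private lemma pow_expand' {A : Type*} [CommRing A] (a b : A) (e : ℕ) :
    ∃ c : A, (a + b) ^ (e + 1) = a ^ (e + 1) + (e + 1 : ℕ) * a ^ e * b + b ^ 2 * c := by
  induction e with
  | zero => exact ⟨0, by push_cast; ring⟩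
  | succ e ih =>
    obtain ⟨c, hc⟩ := ih
    refine ⟨(e + 1 : ℕ) * a ^ e + c * (a + b), ?_⟩
    calc (a + b) ^ (e + 2) = (a + b) ^ (e + 1) * (a + b) := by ring
      _ = (a ^ (e + 1) + (e + 1 : ℕ) * a ^ e * b + b ^ 2 * c) * (a + b) := by rw [hc]
      _ = _ := by push_cast; ring

private lemma key_coeff {A : Type*} [CommRing A] (s e : ℕ) (P Q P₀ Q₀ : A[X])
    (hP : ∀ j ≤ s, P₀.coeff j = P.coeff j) (hP' : ∀ j, s < j → P₀.coeff j = 0)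
    (hQ : ∀ j ≤ s, Q₀.coeff j = Q.coeff j) (hQ' : ∀ j, s < j → Q₀.coeff j = 0) :
    (P ^ (e + 1) * Q).coeff (s + 1) - (P₀ ^ (e + 1) * Q₀).coeff (s + 1) =
      (e + 1 : ℕ) * (P.coeff 0) ^ e * P.coeff (s + 1) * Q.coeff 0 +
        (P.coeff 0) ^ (e + 1) * Q.coeff (s + 1) := by
  obtain ⟨R, hR⟩ : (X : A[X]) ^ (s + 1) ∣ P - P₀ := by
    rw [X_pow_dvd_iff]
    intro d hd
    rw [coeff_sub, hP d (Nat.lt_succ_iff.mp hd), sub_self]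
  obtain ⟨S, hS⟩ : (X : A[X]) ^ (s + 1) ∣ Q - Q₀ := by
    rw [X_pow_dvd_iff]
    intro d hd
    rw [coeff_sub, hQ d (Nat.lt_succ_iff.mp hd), sub_self]
  have hPeq : P = P₀ + X ^ (s + 1) * R := by rw [← hR]; ring
  have hQeq : Q = Q₀ + X ^ (s + 1) * S := by rw [← hS]; ring
  have hXc : ∀ M : A[X], (X ^ (s + 1) * M).coeff (s + 1) = M.coeff 0 := fun M => by
    simpa using coeff_X_pow_mul M (s + 1) 0
  have hR0 : R.coeff 0 = P.coeff (s + 1) := by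
    have := congrArg (fun p => Polynomial.coeff p (s + 1)) hPeq
    simp only [coeff_add, hXc, hP' (s + 1) (Nat.lt_succ_self s), zero_add] at this
    exact this.symm
  have hS0 : S.coeff 0 = Q.coeff (s + 1) := by
    have := congrArg (fun p => Polynomial.coeff p (s + 1)) hQeq
    simp only [coeff_add, hXc, hQ' (s + 1) (Nat.lt_succ_self s), zero_add] at this
    exact this.symm
  have hP00 : P₀.coeff 0 = P.coeff 0 := hP 0 (Nat.zero_le s)
  have hQ00 : Q₀.coeff 0 = Q.coeff 0 := hQ 0 (Nat.zero_le s)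
  obtain ⟨c, hc⟩ := pow_expand' P₀ (X ^ (s + 1) * R) e
  have expand : P ^ (e + 1) * Q =
      P₀ ^ (e + 1) * Q₀ +
        X ^ (s + 1) * (((e + 1 : ℕ) : A[X]) * P₀ ^ e * R * Q₀ + P₀ ^ (e + 1) * S)
        + X ^ (s + 2) * (X ^ s *
          (((e + 1 : ℕ) : A[X]) * P₀ ^ e * R * S + R ^ 2 * c * Q₀ +
            X ^ (s + 1) * (R ^ 2 * c * S))) := by
    rw [hPeq, hQeq, hc]
    ring
  have h2 : ∀ u : A[X], (X ^ (s + 2) * u).coeff (s + 1) = 0 := fun u => by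
    rw [coeff_X_pow_mul']
    simp [Nat.lt_succ_iff]
  have hmid : (X ^ (s + 1) *
      (((e + 1 : ℕ) : A[X]) * P₀ ^ e * R * Q₀ + P₀ ^ (e + 1) * S)).coeff (s + 1)
      = (e + 1 : ℕ) * (P.coeff 0) ^ e * P.coeff (s + 1) * Q.coeff 0 +
        (P.coeff 0) ^ (e + 1) * Q.coeff (s + 1) := by
    have hcc : ∀ p q : A[X], (p * q).coeff 0 = p.coeff 0 * q.coeff 0 := fun p q =>
      mul_coeff_zero p q
    have hpw : ∀ (p : A[X]) (n : ℕ), (p ^ n).coeff 0 = p.coeff 0 ^ n := fun p n => by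
      rw [← constantCoeff_apply, map_pow, constantCoeff_apply]
    have hnat : ((e + 1 : ℕ) : A[X]).coeff 0 = ((e + 1 : ℕ) : A) := by simp
    rw [hXc]
    simp only [coeff_add, hcc, hpw, hnat, hR0, hS0, hP00, hQ00]
  rw [expand]
  simp only [coeff_add, h2, hmid]
  ring

/-- scale the `X` variables by the outer polynomial variable. -/
private noncomputable def sig (m : ℕ) (k : Type) [Field k] :
    MvPolynomial (Fin m) k →+* Polynomial (Polynomial (MvPolynomial (Fin m) k)) :=
  MvPolynomial.eval₂Hom ((Polynomial.C.comp Polynomial.C).comp MvPolynomial.C)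
    (fun i => Polynomial.C (Polynomial.C (MvPolynomial.X i)) * Polynomial.X)

private lemma sig_coeff {k : Type} [Field k] {m : ℕ} (c : MvPolynomial (Fin m) k) (δ : ℕ) :
    (sig m k c).coeff δ = Polynomial.C (MvPolynomial.homogeneousComponent δ c) := by
  induction c using MvPolynomial.induction_on' with
  | add p q hp hq => simp [map_add, hp, hq]
  | monomial d r =>
    rw [sig, MvPolynomial.eval₂Hom_monomial]
    have hprod : (d.prod fun i n =>
          (Polynomial.C (Polynomial.C (MvPolynomial.X i : MvPolynomial (Fin m) k)) *
            Polynomial.X) ^ n)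
        = Polynomial.C (Polynomial.C
            (d.prod fun i n => (MvPolynomial.X i : MvPolynomial (Fin m) k) ^ n)) *
          Polynomial.X ^ d.degree := by
      rw [Finsupp.prod]
      rw [Finset.prod_congr rfl (fun a _ => mul_pow (C (C (MvPolynomial.X a))) (X : (MvPolynomial (Fin m) k)[X][X]) (d a))]
      simp only [← map_pow]
      rw [Finset.prod_mul_distrib, ← map_prod, ← map_prod, Finset.prod_pow_eq_pow_sum]
      rfl
    rw [hprod]
    have hmon : ((Polynomial.C.comp Polynomial.C).comp MvPolynomial.C) r *
        (Polynomial.C (Polynomial.C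
            (d.prod fun i n => (MvPolynomial.X i : MvPolynomial (Fin m) k) ^ n)) *
          Polynomial.X ^ d.degree)
        = Polynomial.C (Polynomial.C (MvPolynomial.monomial d r)) * Polynomial.X ^ d.degree := by
      rw [MvPolynomial.monomial_eq]
      simp only [RingHom.comp_apply, ← mul_assoc, ← map_mul]
    rw [hmon]
    rw [MvPolynomial.homogeneousComponent_of_mem
      ((MvPolynomial.mem_homogeneousSubmodule _ _).mpr
        (MvPolynomial.isHomogeneous_monomial r rfl))]
    simp [coeff_C_mul, coeff_X_pow, apply_ite Polynomial.C, mul_ite, mul_one, mul_zero]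

/-- scale the `X` variables by a new outer variable, as a ring hom on `k[X][Y]`. -/
private noncomputable def Phi (m : ℕ) (k : Type) [Field k] :
    Polynomial (MvPolynomial (Fin m) k) →+* Polynomial (Polynomial (MvPolynomial (Fin m) k)) :=
  Polynomial.eval₂RingHom (S := Polynomial (Polynomial (MvPolynomial (Fin m) k))) (sig m k) (Polynomial.C Polynomial.X)

private lemma Phi_coeff {k : Type} [Field k] {m : ℕ}
    (a : Polynomial (MvPolynomial (Fin m) k)) (δ : ℕ) :
    (Phi m k a).coeff δ = homPart m δ a := by
  induction a using Polynomial.induction_on' with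
  | monomial i c =>
    rw [Phi, coe_eval₂RingHom, Polynomial.eval₂_monomial, homPart,
      Polynomial.sum_monomial_index _ _ (by simp)]
    rw [← map_pow, coeff_mul_C, sig_coeff, ← Polynomial.C_mul_X_pow_eq_monomial]
  | add p q hp hq =>
    rw [RingHom.map_add, coeff_add, hp, hq, homPart, homPart, homPart,
      Polynomial.sum_add_index _ _ _ (fun i => by simp) (fun i c d => by simp [map_add])]

private lemma homPart_homPart {k : Type} [Field k] {m : ℕ} (j δ : ℕ)
    (a : Polynomial (MvPolynomial (Fin m) k)) :
    homPart m j (homPart m δ a) = if j = δ then homPart m δ a else 0 := by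
  have hcoeff : ∀ (ε : ℕ) (b : Polynomial (MvPolynomial (Fin m) k)) (i : ℕ),
      (homPart m ε b).coeff i = MvPolynomial.homogeneousComponent ε (b.coeff i) := by
    intro ε b i
    rw [homPart, Polynomial.sum, Polynomial.finset_sum_coeff]
    simp only [Polynomial.coeff_monomial]
    rw [Finset.sum_ite_eq' b.support i]
    split
    · rfl
    · next h => rw [Polynomial.notMem_support_iff.mp h, map_zero]
  ext i
  rw [hcoeff, hcoeff]
  rw [MvPolynomial.homogeneousComponent_of_mem (MvPolynomial.homogeneousComponent_mem δ _)]
  split <;> simp [hcoeff]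

/-- Hensel lifting step: for `f = g^e h` in `k[X][Y]` (`g` monic in `Y`, `char k = 0`),
with `F := (Σ_{δ≤s} g^{(δ)})^e · (Σ_{δ≤s} h^{(δ)})` and `Δ^{(s+1)} := f^{(s+1)} − F^{(s+1)}`,
one has `Δ^{(s+1)} = e·(g^{(0)})^{e−1}·g^{(s+1)}·h^{(0)} + (g^{(0)})^e·h^{(s+1)}`. -/
theorem hensel_step {k : Type} [Field k] [CharZero k] (m : ℕ)
    (f g h : Polynomial (MvPolynomial (Fin m) k)) (e : ℕ) (he : 1 ≤ e)
    (hmonic : g.Monic) (hf : f = g ^ e * h) (s : ℕ) :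
    homPart m (s + 1) f -
      homPart m (s + 1)
        ((∑ δ ∈ Finset.range (s + 1), homPart m δ g) ^ e *
          (∑ δ ∈ Finset.range (s + 1), homPart m δ h)) =
    (e : Polynomial (MvPolynomial (Fin m) k)) * (homPart m 0 g) ^ (e - 1) *
        homPart m (s + 1) g * homPart m 0 h +
      (homPart m 0 g) ^ e * homPart m (s + 1) h := by
  obtain ⟨e', rfl⟩ : ∃ e', e = e' + 1 := ⟨e - 1, (Nat.succ_pred_eq_of_pos he).symm⟩
  set G := ∑ δ ∈ Finset.range (s + 1), homPart m δ g with hG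
  set H := ∑ δ ∈ Finset.range (s + 1), homPart m δ h with hH
  have htrunc : ∀ (a : Polynomial (MvPolynomial (Fin m) k)) (j : ℕ),
      homPart m j (∑ δ ∈ Finset.range (s + 1), homPart m δ a) =
        if j ≤ s then homPart m j a else 0 := by
    intro a j
    have : ∀ δ ∈ Finset.range (s + 1), True := fun _ _ => trivial
    have hadd : homPart m j (∑ δ ∈ Finset.range (s + 1), homPart m δ a) =
        ∑ δ ∈ Finset.range (s + 1), homPart m j (homPart m δ a) := by
      rw [← Phi_coeff, map_sum, Polynomial.finset_sum_coeff]
      exact Finset.sum_congr rfl fun δ _ => Phi_coeff _ _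
    rw [hadd]
    simp only [homPart_homPart]
    rw [Finset.sum_ite_eq (Finset.range (s + 1)) j (fun δ => homPart m δ a)]
    simp [Finset.mem_range, Nat.lt_succ_iff]
  have main := key_coeff s e' (Phi m k g) (Phi m k h) (Phi m k G) (Phi m k H)
    (fun j hj => by rw [Phi_coeff, Phi_coeff, hG, htrunc g j, if_pos hj])
    (fun j hj => by rw [Phi_coeff, hG, htrunc g j, if_neg (Nat.not_le_of_lt hj)])
    (fun j hj => by rw [Phi_coeff, Phi_coeff, hH, htrunc h j, if_pos hj])
    (fun j hj => by rw [Phi_coeff, hH, htrunc h j, if_neg (Nat.not_le_of_lt hj)])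
  rw [← map_pow, ← map_mul, ← map_pow, ← map_mul, Phi_coeff, Phi_coeff] at main
  rw [Phi_coeff, Phi_coeff, Phi_coeff, Phi_coeff] at main
  rw [← hf] at main
  rw [main]
  push_cast
  simp
end
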